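/- arXiv:math/9911030 — 7 statements merged into one kernel-verified Lean document; each statement's English description precedes it below -/
import Mathlib

section
/- Let R be a unique factorization domain with field of fractions K, and let f(t) = Σ_{i=0}^m a_i t^i and g(t) = Σ_{j=0}^n b_j t^j be relatively prime polynomials in R[t] with b_0 ≠ 0. If every coefficient of the formal power series expansion of f/g in K[[t]] lies in R, then b_0 is a unit in R. -/
open Polynomial PowerSeries
open scoped nonZeroDivisors

private lemma psCoeMap {R S : Type*} [CommRing R] [CommRing S] (σ : R →+* S) (p : Polynomial R) :
    PowerSeries.map σ (p : PowerSeries R) = ((p.map σ : Polynomial S) : PowerSeries S) := by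
  ext n
  simp [PowerSeries.coeff_map, Polynomial.coeff_coe, Polynomial.coeff_map]

private lemma descent_lemma {R : Type*} [CommRing R] [IsDomain R] (g : Polynomial R) (p : R)
    (hp : Prime p) (hpb : p ∣ g.coeff 0) (hpg : ¬ Polynomial.C p ∣ g) :
    ∀ (n : ℕ) (a : R) (W : PowerSeries R), ¬ p ∣ a →
      (g : PowerSeries R) * W = PowerSeries.C (p ^ n * a) → False := by
  intro n
  induction n with
  | zero =>
    intro a W ha hW
    apply ha
    have h0 := congrArg (PowerSeries.constantCoeff) hW
    simp only [map_mul, Polynomial.constantCoeff_coe, PowerSeries.constantCoeff_C,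
      pow_zero, one_mul] at h0
    exact h0 ▸ hpb.mul_right _
  | succ n ih =>
    intro a W ha hW
    have hpc : p ∣ p ^ (n + 1) * a := (dvd_pow_self p (Nat.succ_ne_zero n)).mul_right a
    set θ := Ideal.Quotient.mk (Ideal.span {p}) with hθ
    haveI : (Ideal.span {p}).IsPrime := (Ideal.span_singleton_prime hp.ne_zero).mpr hp
    -- map the equation mod p
    have hmap := congrArg (PowerSeries.map θ) hW
    rw [map_mul, psCoeMap, PowerSeries.map_C] at hmap
    have hc0 : θ (p ^ (n + 1) * a) = 0 := (Ideal.Quotient.eq_zero_iff_dvd _ _).mpr hpc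
    rw [hc0, map_zero] at hmap
    have hgθ : ((g.map θ : Polynomial (R ⧸ Ideal.span {p})) : PowerSeries (R ⧸ Ideal.span {p})) ≠ 0 := by
      rw [Ne, Polynomial.coe_eq_zero_iff]
      intro h0
      apply hpg
      rw [Polynomial.C_dvd_iff_dvd_coeff]
      intro i
      have := Polynomial.ext_iff.mp h0 i
      rw [Polynomial.coeff_map, Polynomial.coeff_zero] at this
      exact (Ideal.Quotient.eq_zero_iff_dvd _ _).mp this
    have hWθ : PowerSeries.map θ W = 0 := by
      rcases mul_eq_zero.mp hmap with h | h
      · exact absurd h hgθ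
      · exact h
    have hdvdW : ∀ m : ℕ, p ∣ PowerSeries.coeff m W := by
      intro m
      have := congrArg (PowerSeries.coeff m) hWθ
      rw [PowerSeries.coeff_map, map_zero] at this
      exact (Ideal.Quotient.eq_zero_iff_dvd _ _).mp this
    set W' : PowerSeries R := PowerSeries.mk fun m => (hdvdW m).choose with hW'def
    have hWW' : W = PowerSeries.C p * W' := by
      ext m
      rw [PowerSeries.coeff_C_mul, hW'def, PowerSeries.coeff_mk]
      exact (hdvdW m).choose_spec
    rw [hWW', pow_succ, mul_comm (p ^ n) p, mul_assoc, map_mul] at hW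
    have hCp : PowerSeries.C p ≠ 0 := fun h =>
      hp.ne_zero (by simpa using congrArg (PowerSeries.constantCoeff) h)
    have : (g : PowerSeries R) * W' = PowerSeries.C (p ^ n * a) := by
      apply mul_left_cancel₀ hCp
      rw [← hW]; ring
    exact ih a W' ha this

/-- Let `R` be a UFD with field of fractions `K`, and let `f, g ∈ R[t]` be relatively prime
polynomials with constant coefficient of `g` nonzero. If every coefficient of the power series
expansion of `f/g` in `K[[t]]` lies in `R`, then the constant coefficient of `g` is a unit. -/
theorem constant_coeff_unit_of_integral_taylor_coeffs
    {R K : Type*} [CommRing R] [IsDomain R] [UniqueFactorizationMonoid R]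
    [Field K] [Algebra R K] [IsFractionRing R K]
    (f g : Polynomial R) (hcop : IsRelPrime f g) (hb0 : g.coeff 0 ≠ 0)
    (h : ∀ n : ℕ, ∃ r : R,
      PowerSeries.coeff n
        (((f.map (algebraMap R K) : Polynomial K) : PowerSeries K) *
          ((g.map (algebraMap R K) : Polynomial K) : PowerSeries K)⁻¹) = algebraMap R K r) :
    IsUnit (g.coeff 0) := by
  classical
  by_cases hf0 : f = 0
  · have hu : IsUnit g := hcop (by rw [hf0]; exact dvd_zero g) dvd_rfl
    obtain ⟨r, hr, hrg⟩ := Polynomial.isUnit_iff.mp hu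
    rw [← hrg, Polynomial.coeff_C]
    simpa using hr
  letI : NormalizationMonoid R := UniqueFactorizationMonoid.normalizationMonoid.toNormalizationMonoid
  letI : NormalizedGCDMonoid R := UniqueFactorizationMonoid.toNormalizedGCDMonoid R
  set φ := algebraMap R K with hφdef
  have hφ : Function.Injective φ := IsFractionRing.injective R K
  set fK := f.map φ with hfKdef
  set gK := g.map φ with hgKdef
  have hfK0 : fK ≠ 0 := by
    rw [hfKdef, Ne, Polynomial.map_eq_zero_iff hφ]; exact hf0
  have hg0 : g ≠ 0 := fun hg => hb0 (by simp [hg])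
  have hgK0 : gK ≠ 0 := by
    rw [hgKdef, Ne, Polynomial.map_eq_zero_iff hφ]; exact hg0
  -- coprimality over K
  have hrel : IsRelPrime fK gK := by
    intro d hdf hdg
    have hd0 : d ≠ 0 := fun hd => hfK0 (by simpa [hd] using hdf)
    obtain ⟨⟨s, s0⟩, hs⟩ := IsLocalization.integerNormalization_map_to_map R⁰ d
    have hs0 : s ≠ 0 := mem_nonZeroDivisors_iff_ne_zero.mp s0
    set dn := IsLocalization.integerNormalization R⁰ d with hdndef
    have hdn0 : dn ≠ 0 := by
      rw [hdndef, Ne, IsFractionRing.integerNormalization_eq_zero_iff]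
      exact hd0
    set p₀ := dn.primPart with hp₀def
    have hdn : dn = Polynomial.C dn.content * p₀ := dn.eq_C_content_mul_primPart
    have hsK0 : φ s ≠ 0 := fun hc => hs0 (hφ (by simpa using hc))
    have hsU : IsUnit (Polynomial.C (φ s)) :=
      Polynomial.isUnit_C.mpr (isUnit_iff_ne_zero.mpr hsK0)
    have hmapdn : dn.map φ = Polynomial.C (φ s) * d := by
      rw [hs, Algebra.smul_def]
      simp [Polynomial.algebraMap_apply, hφdef]
    have hdvd_p₀ : ∀ q : Polynomial K, d ∣ q → p₀.map φ ∣ q := by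
      intro q hdq
      have h2 : p₀.map φ ∣ Polynomial.C (φ s) * d := by
        rw [← hmapdn]
        exact Polynomial.map_dvd _ dn.primPart_dvd
      exact ((hsU.dvd_mul_left).mp h2).trans hdq
    have hprim : ∀ q : Polynomial R, q ≠ 0 → p₀.map φ ∣ q.map φ → p₀ ∣ q := by
      intro q hq0 hdvd
      have hu : IsUnit (Polynomial.C (φ q.content)) := Polynomial.isUnit_C.mpr
        (isUnit_iff_ne_zero.mpr (fun hcc => hq0 (Polynomial.content_eq_zero_iff.mp
          (hφ (by simpa using hcc)))))
      have h4 : p₀.map φ ∣ q.primPart.map φ := by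
        have hqeq : q.map φ = Polynomial.C (φ q.content) * q.primPart.map φ := by
          conv_lhs => rw [q.eq_C_content_mul_primPart]
          rw [Polynomial.map_mul, Polynomial.map_C]
        rw [hqeq] at hdvd
        exact (hu.dvd_mul_left).mp hdvd
      exact ((Polynomial.isPrimitive_primPart dn).dvd_of_fraction_map_dvd_fraction_map
        h4).trans q.primPart_dvd
    have hup₀ : IsUnit p₀ := hcop (hprim f hf0 (hdvd_p₀ _ hdf)) (hprim g hg0 (hdvd_p₀ _ hdg))
    have hu1 : IsUnit (p₀.map φ) := hup₀.map (Polynomial.mapRingHom φ)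
    have hcont0 : φ dn.content ≠ 0 := fun hc =>
      hdn0 (Polynomial.content_eq_zero_iff.mp (hφ (by simpa using hc)))
    have hmapp₀ : Polynomial.C (φ dn.content) * p₀.map φ = Polynomial.C (φ s) * d := by
      rw [← hmapdn]
      conv_lhs => rw [← Polynomial.map_C (f := φ), ← Polynomial.map_mul, ← hdn]
    have hud : IsUnit (Polynomial.C (φ s) * d) := by
      rw [← hmapp₀]
      exact (Polynomial.isUnit_C.mpr (isUnit_iff_ne_zero.mpr hcont0)).mul hu1
    exact isUnit_of_mul_isUnit_right hud
  have hcopK : IsCoprime fK gK := hrel.isCoprime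
  obtain ⟨u, v, huv⟩ := hcopK
  -- clear denominators
  obtain ⟨⟨c, c0⟩, hc⟩ := IsLocalization.integerNormalization_map_to_map R⁰ u
  obtain ⟨⟨e, e0⟩, he⟩ := IsLocalization.integerNormalization_map_to_map R⁰ v
  have hc0 : c ≠ 0 := mem_nonZeroDivisors_iff_ne_zero.mp c0
  have he0 : e ≠ 0 := mem_nonZeroDivisors_iff_ne_zero.mp e0
  set A := IsLocalization.integerNormalization R⁰ u * Polynomial.C e with hAdef
  set B := IsLocalization.integerNormalization R⁰ v * Polynomial.C c with hBdef
  have hABc : A * f + B * g = Polynomial.C (c * e) := by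
    apply Polynomial.map_injective φ hφ
    have hcu : (IsLocalization.integerNormalization R⁰ u).map (algebraMap R K)
        = Polynomial.C (φ c) * u := by
      rw [hc, Algebra.smul_def, Polynomial.algebraMap_apply]
    have hev : (IsLocalization.integerNormalization R⁰ v).map (algebraMap R K)
        = Polynomial.C (φ e) * v := by
      rw [he, Algebra.smul_def, Polynomial.algebraMap_apply]
    rw [Polynomial.map_add, hAdef, hBdef, Polynomial.map_mul, Polynomial.map_mul,
      Polynomial.map_mul, Polynomial.map_mul, Polynomial.map_C, Polynomial.map_C,
      Polynomial.map_C, hcu, hev, ← hfKdef, ← hgKdef]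
    calc Polynomial.C (φ c) * u * Polynomial.C (φ e) * fK
          + Polynomial.C (φ e) * v * Polynomial.C (φ c) * gK
        = Polynomial.C (φ c) * Polynomial.C (φ e) * (u * fK + v * gK) := by ring
      _ = Polynomial.C (φ (c * e)) := by
          rw [huv, mul_one, map_mul, Polynomial.C_mul]
  -- the power series Q with coefficients in R
  set Q : PowerSeries R := PowerSeries.mk fun n => (h n).choose with hQdef
  have hQmap : PowerSeries.map φ Q = (fK : PowerSeries K) * (gK : PowerSeries K)⁻¹ := by
    ext n
    rw [PowerSeries.coeff_map, hQdef, PowerSeries.coeff_mk]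
    exact ((h n).choose_spec).symm
  have hgKc : PowerSeries.constantCoeff (gK : PowerSeries K) ≠ 0 := by
    rw [Polynomial.constantCoeff_coe, hgKdef, Polynomial.coeff_map]
    exact fun hcc => hb0 (hφ (by simpa using hcc))
  have hfg : (g : PowerSeries R) * Q = (f : PowerSeries R) := by
    have hinj : Function.Injective (PowerSeries.map φ : PowerSeries R → PowerSeries K) := by
      intro x y hxy
      ext n
      apply hφ
      have := congrArg (PowerSeries.coeff n) hxy
      simpa [PowerSeries.coeff_map] using this
    apply hinj
    rw [map_mul, psCoeMap, psCoeMap, hQmap, ← hfKdef, ← hgKdef]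
    rw [← mul_assoc, mul_comm ((gK : PowerSeries K)) ((fK : PowerSeries K)), mul_assoc,
      PowerSeries.mul_inv_cancel _ hgKc, mul_one]
  -- g * W = C (c * e)
  set W : PowerSeries R := (A : PowerSeries R) * Q + (B : PowerSeries R) with hWdef
  have hgW : (g : PowerSeries R) * W = PowerSeries.C (c * e) := by
    rw [hWdef, mul_add, ← mul_assoc, mul_comm ((g : PowerSeries R)) ((A : PowerSeries R)),
      mul_assoc, hfg]
    have : ((A : PowerSeries R)) * (f : PowerSeries R) + (g : PowerSeries R) * (B : PowerSeries R)
        = ((A * f + B * g : Polynomial R) : PowerSeries R) := by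
      push_cast
      ring
    rw [this, hABc, Polynomial.coe_C]
  -- descent
  by_contra hbu
  obtain ⟨p, hirr, hpdvd⟩ := WfDvdMonoid.exists_irreducible_factor hbu hb0
  have hp : Prime p := UniqueFactorizationMonoid.irreducible_iff_prime.mp hirr
  have hCp : ¬ Polynomial.C p ∣ g := by
    intro hCg
    have hCf : Polynomial.C p ∣ f := by
      rw [Polynomial.C_dvd_iff_dvd_coeff] at hCg ⊢
      intro n
      rw [← Polynomial.coeff_coe, ← hfg, PowerSeries.coeff_mul]
      apply Finset.dvd_sum
      intro x _
      exact ((Polynomial.coeff_coe g x.1) ▸ hCg x.1).mul_right _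
    exact hp.not_unit (Polynomial.isUnit_C.mp (hcop hCf hCg))
  obtain ⟨n, a, hpa, hce⟩ := WfDvdMonoid.max_power_factor (mul_ne_zero hc0 he0) hirr
  exact descent_lemma g p hp hpdvd hCp n a W hpa (by rw [hgW, hce])
end

section
/- Let b_0, ..., b_{m-1} be positive integers and c_m, ..., c_d be positive integers (viewed as the negatives -b_m, ..., -b_d of the negative entries of a circuit vector) with b_0 + ... + b_{m-1} = c_m + ... + c_d. Then the identity ∏_{i=0}^{m-1} ∏_{j=1}^{b_i} (n b_i + j) = ∏_{i=m}^{d} ∏_{j=1}^{c_i} (n c_i + j) holds for all natural numbers n ≥ 0 if and only if the multiset {b_0, ..., b_{m-1}} equals the multiset {c_m, ..., c_d}. -/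
open Finset

lemma key_count_aux (p v b B q r a t : ℕ) (hp : p.Prime) (hv : 1 ≤ v) (hb : 1 ≤ b)
    (hbB : b ≤ B) (hpqr : p = q * v + r) (hr : r < v) (hbat : b = a * v + t) (ht : t < v)
    (haB : a ≤ B) (hqB : B * v + 2 * v ≤ q) (hBp : 2 * B + 1 < p) :
    ((Finset.range b).filter (fun j => p ∣ (2 * p - (q + 1)) * b + j + 1)).card
      = if v ∣ b then 1 else 0 := by
  haveI : NeZero p := ⟨hp.ne_zero⟩
  obtain ⟨s, hs⟩ : ∃ s, v = r + s ∧ 1 ≤ s := ⟨v - r, by omega⟩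
  obtain ⟨hs1, hs2⟩ := hs
  set R := a * s + (q + 1) * t with hRdef
  have hqv : q ≤ q * v := Nat.le_mul_of_pos_right _ hv
  have hqp : q + 1 ≤ 2 * p := by omega
  have hA : (q + 1) * b = a * p + R := by
    subst hpqr hbat hs1; ring
  have hRp : R < p := by
    have h1 : a * s ≤ B * v := Nat.mul_le_mul haB (by omega)
    have h2 : (q + 1) * (t + 1) ≤ (q + 1) * v := Nat.mul_le_mul_left _ (by omega)
    have h3 : (q + 1) * (t + 1) = (q + 1) * t + q + 1 := by ring
    have h4 : (q + 1) * v = q * v + v := by ring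
    omega
  have key : ∀ j, j < b → (p ∣ (2 * p - (q + 1)) * b + j + 1 ↔ j + 1 = R) := by
    intro j hj
    have hnw : ((2 * p - (q + 1) : ℕ) : ZMod p) = -((q : ZMod p) + 1) := by
      have h5 : (((2 * p - (q + 1)) + (q + 1) : ℕ) : ZMod p) = ((2 * p : ℕ) : ZMod p) := by
        congr 1; omega
      push_cast [ZMod.natCast_self] at h5
      linear_combination h5
    have hwbz : ((q : ZMod p) + 1) * (b : ZMod p) = (R : ZMod p) := by
      have h6 := congrArg (fun x : ℕ => (x : ZMod p)) hA
      push_cast [ZMod.natCast_self] at h6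
      linear_combination h6
    have hcast : (((2 * p - (q + 1)) * b + j + 1 : ℕ) : ZMod p)
        = ((j + 1 : ℕ) : ZMod p) - ((R : ℕ) : ZMod p) := by
      push_cast
      linear_combination (b : ZMod p) * hnw - hwbz
    rw [← ZMod.natCast_eq_zero_iff, hcast, sub_eq_zero]
    constructor
    · intro h
      have h7 : ((j + 1 : ℕ) : ZMod p).val = ((R : ℕ) : ZMod p).val := by rw [h]
      rwa [ZMod.val_cast_of_lt (by omega), ZMod.val_cast_of_lt hRp] at h7
    · intro h; rw [h]
  by_cases hdvd : v ∣ b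
  · have ht0 : t = 0 := by
      have h8 : v ∣ t := (Nat.dvd_add_right (dvd_mul_left v a)).mp (hbat ▸ hdvd)
      exact Nat.eq_zero_of_dvd_of_lt h8 ht
    have hR' : R = a * s := by rw [hRdef, ht0]; ring
    have hapos : 1 ≤ a := by
      rcases Nat.eq_zero_or_pos a with h | h
      · exfalso; have hav : a * v = 0 := by rw [h]; ring
        omega
      · exact h
    have hR1 : 1 ≤ R := by rw [hR']; exact Nat.mul_pos hapos hs2
    have hRb : R ≤ b := by
      rw [hR']
      have h9 : a * s ≤ a * v := Nat.mul_le_mul_left _ (by omega)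
      omega
    rw [if_pos hdvd, Finset.card_eq_one]
    refine ⟨R - 1, ?_⟩
    ext j
    simp only [Finset.mem_filter, Finset.mem_range, Finset.mem_singleton]
    constructor
    · rintro ⟨hj, hd⟩
      have := (key j hj).mp hd
      omega
    · rintro rfl
      have hj : R - 1 < b := by omega
      exact ⟨hj, (key _ hj).mpr (by omega)⟩
  · have htpos : 1 ≤ t := by
      rcases Nat.eq_zero_or_pos t with h | h
      · exfalso; exact hdvd ⟨a, by rw [hbat, h]; ring⟩
      · exact h
    have hRb : b < R := by
      have h9 : q + 1 ≤ (q + 1) * t := Nat.le_mul_of_pos_right _ htpos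
      have h10 : B ≤ B * v := Nat.le_mul_of_pos_right _ hv
      omega
    rw [if_neg hdvd, Finset.card_eq_zero, Finset.filter_false_of_mem]
    intro j hj
    rw [Finset.mem_range] at hj
    rw [key j hj]
    omega

lemma key_count (p v b B : ℕ) (hp : p.Prime) (hv : 1 ≤ v) (hb : 1 ≤ b) (hbB : b ≤ B)
    (hpB : (B + 2) * v * v + 2 * B + 2 ≤ p) :
    ((Finset.range b).filter (fun j => p ∣ (2 * p - (p / v + 1)) * b + j + 1)).card
      = if v ∣ b then 1 else 0 := by
  have hvv : 1 ≤ v * v := Nat.mul_pos hv hv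
  have hBv2 : (B + 2) * v * v = (B + 2) * (v * v) := by ring
  apply key_count_aux p v b B (p / v) (p % v) (b / v) (b % v) hp hv hb hbB
  · exact (Nat.div_add_mod' p v).symm
  · exact Nat.mod_lt _ hv
  · exact (Nat.div_add_mod' b v).symm
  · exact Nat.mod_lt _ hv
  · exact le_trans (Nat.div_le_self _ _) hbB
  · have h1 : (B + 2) * v ≤ p / v := by
      rw [Nat.le_div_iff_mul_le hv]
      nlinarith
    nlinarith
  · nlinarith

lemma fac_single (p x : ℕ) (hp : p.Prime) (hx : 0 < x) (hxp : x < p * p) :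
    x.factorization p = if p ∣ x then 1 else 0 := by
  split_ifs with h
  · have h1 : 1 ≤ x.factorization p := (hp.dvd_iff_one_le_factorization hx.ne').mp h
    have h2 : ¬ (p ^ 2 ∣ x) := by
      intro hd
      have := Nat.le_of_dvd hx hd
      have : p ^ 2 = p * p := sq p
      omega
    rw [hp.pow_dvd_iff_le_factorization hx.ne'] at h2
    omega
  · exact Nat.factorization_eq_zero_of_not_dvd h

lemma prod_fact {m : ℕ} (b : Fin m → ℕ) (hb : ∀ i, 0 < b i) (B : ℕ) (hbB : ∀ i, b i ≤ B)
    (p v : ℕ) (hp : p.Prime) (hv : 1 ≤ v) (hpB : (B + 2) * v * v + 2 * B + 2 ≤ p) :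
    (∏ i, ∏ j ∈ Finset.range (b i), ((2 * p - (p / v + 1)) * b i + j + 1)).factorization p
      = (Finset.univ.filter (fun i => v ∣ b i)).card := by
  have hfne : ∀ i : Fin m, (∏ j ∈ Finset.range (b i), ((2 * p - (p / v + 1)) * b i + j + 1)) ≠ 0 := by
    intro i
    exact Finset.prod_ne_zero_iff.mpr (fun j _ => by omega)
  rw [Nat.factorization_prod (fun i _ => hfne i), Finsupp.finset_sum_apply]
  have hstep : ∀ i : Fin m,
      (∏ j ∈ Finset.range (b i), ((2 * p - (p / v + 1)) * b i + j + 1)).factorization p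
        = if v ∣ b i then 1 else 0 := by
    intro i
    rw [Nat.factorization_prod (fun j _ => by omega), Finsupp.finset_sum_apply]
    have hbound : ∀ j ∈ Finset.range (b i), ((2 * p - (p / v + 1)) * b i + j + 1) < p * p := by
      intro j hj
      rw [Finset.mem_range] at hj
      have h1 : 2 * p - (p / v + 1) ≤ 2 * p := Nat.sub_le _ _
      have h2 : (2 * p - (p / v + 1)) * b i ≤ 2 * p * B :=
        Nat.mul_le_mul h1 (hbB i)
      have h3 : j + 1 ≤ B := lt_of_lt_of_le hj (hbB i)
      have h4 : 2 * p * B + B < p * p := by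
        have hpb : 2 * B + 2 ≤ p := le_trans (Nat.le_add_left _ _) hpB
        have h5 : p * (2 * B + 2) ≤ p * p := Nat.mul_le_mul_left p hpb
        nlinarith
      omega
    rw [Finset.sum_congr rfl (fun j hj => fac_single p _ hp (by omega) (hbound j hj))]
    rw [← Finset.card_filter]
    exact key_count p v (b i) B hp hv (hb i) (hbB i) hpB
  rw [Finset.sum_congr rfl (fun i _ => hstep i), ← Finset.card_filter]

lemma div_count_decomp {N : ℕ} (f : Fin N → ℕ) (hf : ∀ i, 0 < f i) (B : ℕ)
    (hfB : ∀ i, f i ≤ B) (u : ℕ) (hu : 1 ≤ u) :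
    (Finset.univ.filter (fun i => u ∣ f i)).card
      = ∑ a ∈ Finset.Icc 1 B, (Finset.univ.filter (fun i => f i = a * u)).card := by
  rw [← Finset.card_biUnion]
  · congr 1
    ext i
    simp only [Finset.mem_biUnion, Finset.mem_filter, Finset.mem_univ, true_and,
      Finset.mem_Icc]
    constructor
    · intro h
      refine ⟨f i / u, ⟨?_, ?_⟩, ?_⟩
      · have h2 : u ≤ f i := Nat.le_of_dvd (hf i) h
        exact (Nat.one_le_div_iff (by omega)).mpr h2
      · exact le_trans (Nat.div_le_self _ _) (hfB i)
      · exact (Nat.div_mul_cancel h).symm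
    · rintro ⟨a, _, hfa⟩
      rw [hfa]
      exact dvd_mul_left u a
  · intro x _ y _ hxy
    rw [Function.onFun, Finset.disjoint_left]
    intro i hi1 hi2
    simp only [Finset.mem_filter] at hi1 hi2
    exact hxy (Nat.eq_of_mul_eq_mul_right hu (hi1.2.symm.trans hi2.2))

lemma counts_eq {m k : ℕ} (b : Fin m → ℕ) (c : Fin k → ℕ)
    (hb : ∀ i, 0 < b i) (hc : ∀ i, 0 < c i) (B : ℕ)
    (hbB : ∀ i, b i ≤ B) (hcB : ∀ i, c i ≤ B)
    (h : ∀ v, 1 ≤ v → (Finset.univ.filter (fun i => v ∣ b i)).card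
                    = (Finset.univ.filter (fun i => v ∣ c i)).card)
    (u : ℕ) (hu : 1 ≤ u) :
    (Finset.univ.filter (fun i => b i = u)).card
      = (Finset.univ.filter (fun i => c i = u)).card := by
  have H : ∀ d : ℕ, ∀ u : ℕ, 1 ≤ u → B < u + d →
      (Finset.univ.filter (fun i => b i = u)).card
        = (Finset.univ.filter (fun i => c i = u)).card := by
    intro d
    induction d with
    | zero =>
      intro u hu hBu
      have e1 : (Finset.univ.filter (fun i : Fin m => b i = u)) = ∅ :=
        Finset.filter_eq_empty_iff.mpr (fun i _ => by have := hbB i; omega)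
      have e2 : (Finset.univ.filter (fun i : Fin k => c i = u)) = ∅ :=
        Finset.filter_eq_empty_iff.mpr (fun i _ => by have := hcB i; omega)
      rw [e1, e2]
      rfl
    | succ d ih =>
      intro u hu hBu
      by_cases hcase : B < u
      · have e1 : (Finset.univ.filter (fun i : Fin m => b i = u)) = ∅ :=
          Finset.filter_eq_empty_iff.mpr (fun i _ => by have := hbB i; omega)
        have e2 : (Finset.univ.filter (fun i : Fin k => c i = u)) = ∅ :=
          Finset.filter_eq_empty_iff.mpr (fun i _ => by have := hcB i; omega)
        rw [e1, e2]
        rfl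
      · have h1 := h u hu
        rw [div_count_decomp b hb B hbB u hu, div_count_decomp c hc B hcB u hu] at h1
        have hB1 : 1 ∈ Finset.Icc 1 B := by rw [Finset.mem_Icc]; omega
        rw [← Finset.add_sum_erase _ _ hB1, ← Finset.add_sum_erase _ _ hB1] at h1
        have h2 : ∑ a ∈ (Finset.Icc 1 B).erase 1,
              (Finset.univ.filter (fun i : Fin m => b i = a * u)).card
            = ∑ a ∈ (Finset.Icc 1 B).erase 1,
              (Finset.univ.filter (fun i : Fin k => c i = a * u)).card := by
          apply Finset.sum_congr rfl
          intro a ha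
          rw [Finset.mem_erase, Finset.mem_Icc] at ha
          apply ih
          · have := Nat.mul_pos (show 0 < a by omega) hu
            omega
          · have h3 : 2 * u ≤ a * u := Nat.mul_le_mul_right u (by omega)
            omega
        rw [h2] at h1
        have h4 := Nat.add_right_cancel h1
        simpa [one_mul] using h4
  exact H (B + 1 - u) u hu (by omega)

lemma count_map_univ {N : ℕ} (f : Fin N → ℕ) (u : ℕ) :
    Multiset.count u (Multiset.map f Finset.univ.val)
      = (Finset.univ.filter (fun i => f i = u)).card := by
  rw [Multiset.count_map]
  have e : Multiset.filter (fun a => u = f a) Finset.univ.val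
      = (Finset.univ.filter (fun i => f i = u)).val := by
    rw [Finset.filter_val]
    apply Multiset.filter_congr
    intro i _
    exact eq_comm
  rw [e]
  rfl

/-- Let `b₀,…,b_{m-1}` and `c₀,…,c_{k-1}` be positive integers with equal sums.
Then the identity `∏_i ∏_{j=1}^{bᵢ} (n bᵢ + j) = ∏_i ∏_{j=1}^{cᵢ} (n cᵢ + j)` holds
for all natural numbers `n` if and only if the multiset `{b₀,…,b_{m-1}}` equals the
multiset `{c₀,…,c_{k-1}}`. -/
theorem circuit_factorial_identity_iff_balanced {m k : ℕ}
    (b : Fin m → ℕ) (c : Fin k → ℕ)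
    (hb : ∀ i, 0 < b i) (hc : ∀ i, 0 < c i)
    (hsum : ∑ i, b i = ∑ i, c i) :
    (∀ n : ℕ, (∏ i, ∏ j ∈ Finset.range (b i), (n * b i + j + 1)) =
              (∏ i, ∏ j ∈ Finset.range (c i), (n * c i + j + 1))) ↔
    Multiset.map b Finset.univ.val = Multiset.map c Finset.univ.val := by
  constructor
  · intro H
    have hbB : ∀ i, b i ≤ ∑ i', b i' :=
      fun i => Finset.single_le_sum (fun j _ => Nat.zero_le _) (Finset.mem_univ i)
    have hcB : ∀ i, c i ≤ ∑ i', b i' := by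
      intro i
      rw [hsum]
      exact Finset.single_le_sum (fun j _ => Nat.zero_le _) (Finset.mem_univ i)
    have hcount : ∀ v, 1 ≤ v →
        (Finset.univ.filter (fun i => v ∣ b i)).card
          = (Finset.univ.filter (fun i => v ∣ c i)).card := by
      intro v hv
      obtain ⟨p, hple, hp⟩ :=
        Nat.exists_infinite_primes ((∑ i', b i' + 2) * v * v + 2 * (∑ i', b i') + 2)
      have h1 := congrArg (fun x : ℕ => x.factorization p) (H (2 * p - (p / v + 1)))
      rw [prod_fact b hb _ hbB p v hp hv hple, prod_fact c hc _ hcB p v hp hv hple] at h1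
      exact h1
    rw [Multiset.ext]
    intro u
    rw [count_map_univ, count_map_univ]
    rcases Nat.eq_zero_or_pos u with rfl | hu
    · have e1 : (Finset.univ.filter (fun i : Fin m => b i = 0)) = ∅ :=
        Finset.filter_eq_empty_iff.mpr (fun i _ => (hb i).ne')
      have e2 : (Finset.univ.filter (fun i : Fin k => c i = 0)) = ∅ :=
        Finset.filter_eq_empty_iff.mpr (fun i _ => (hc i).ne')
      rw [e1, e2]
      rfl
    · exact counts_eq b c hb hc _ hbB hcB hcount u hu
  · intro H n
    rw [Finset.prod_eq_multiset_prod, Finset.prod_eq_multiset_prod]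
    have e1 : (fun i : Fin m => ∏ j ∈ Finset.range (b i), (n * b i + j + 1))
        = (fun x => ∏ j ∈ Finset.range x, (n * x + j + 1)) ∘ b := rfl
    have e2 : (fun i : Fin k => ∏ j ∈ Finset.range (c i), (n * c i + j + 1))
        = (fun x => ∏ j ∈ Finset.range x, (n * x + j + 1)) ∘ c := rfl
    rw [e1, e2, ← Multiset.map_map, ← Multiset.map_map, H]
end

section
/- Let b = (b_0, ..., b_d) be an integer vector with b_j > 0 for j < m and b_j < 0 for j ≥ m, and suppose there exists an integer vector c = (c_0,...,c_d) and a nonzero constant λ ∈ ℂ such that the function γ(n) = λ^{-n} · (∏_{j ≥ m} (-c_j - n b_j - 1)!) / (∏_{j < m} (c_j + n b_j)!) is a polynomial function of n for n ∈ ℕ sufficiently large. Then max{b_j : j < m} = max{-b_j : j ≥ m}. -/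
open Filter Polynomial

private lemma fac_add (a s : ℕ) :
    Nat.factorial (a + s) = Nat.factorial a * ∏ k ∈ Finset.range s, (a + k + 1) := by
  induction s with
  | zero => simp
  | succ s ih =>
    rw [Finset.prod_range_succ, ← mul_assoc, ← ih,
      show a + (s + 1) = (a + s) + 1 from rfl, Nat.factorial_succ, mul_comm]

private lemma chase_down (P₀ A B : Polynomial ℂ) {lam : ℂ} (hlam : lam ≠ 0) (hP₀ : P₀ ≠ 0)
    (hId : ∀ x : ℂ, lam * P₀.eval (x + 1) * B.eval x = P₀.eval x * A.eval x)
    (α : ℂ) (hα : B.eval α = 0) :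
    ∃ k : ℤ, A.eval (α + k) = 0 := by
  by_contra hcon
  push_neg at hcon
  have key : ∀ n : ℕ, P₀.eval (α - n) = 0 := by
    intro n
    induction n with
    | zero =>
      have h := hId α
      rw [hα, mul_zero] at h
      have hA : A.eval α ≠ 0 := by simpa using hcon 0
      simpa using (mul_eq_zero.1 h.symm).resolve_right hA
    | succ n ih =>
      have h := hId (α - (n + 1 : ℕ))
      have e1 : α - ((n + 1 : ℕ) : ℂ) + 1 = α - n := by push_cast; ring
      rw [e1, ih, mul_zero, zero_mul] at h
      have hA : A.eval (α - (n + 1 : ℕ)) ≠ 0 := by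
        have := hcon (-(n + 1 : ℕ) : ℤ)
        convert this using 2
        push_cast; ring
      exact (mul_eq_zero.1 h.symm).resolve_right hA
  have hinf : {x | P₀.IsRoot x}.Infinite := by
    apply Set.infinite_of_injective_forall_mem (f := fun n : ℕ => α - (n : ℂ))
    · intro a b hab
      have : (a : ℂ) = b := by
        have := sub_right_inj.1 hab
        exact_mod_cast this
      exact_mod_cast this
    · intro n; exact key n
  exact hP₀ (P₀.eq_zero_of_infinite_isRoot hinf)

private lemma chase_up (P₀ A B : Polynomial ℂ) {lam : ℂ} (hlam : lam ≠ 0) (hP₀ : P₀ ≠ 0)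
    (hId : ∀ x : ℂ, lam * P₀.eval (x + 1) * B.eval x = P₀.eval x * A.eval x)
    (β : ℂ) (hβ : A.eval β = 0) :
    ∃ k : ℤ, B.eval (β + k) = 0 := by
  by_contra hcon
  push_neg at hcon
  have key : ∀ n : ℕ, P₀.eval (β + 1 + n) = 0 := by
    intro n
    induction n with
    | zero =>
      have h := hId β
      rw [hβ, mul_zero] at h
      have hB : B.eval β ≠ 0 := by simpa using hcon 0
      have h2 := (mul_eq_zero.1 h).resolve_right hB
      simpa using (mul_eq_zero.1 h2).resolve_left hlam
    | succ n ih =>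
      have h := hId (β + 1 + n)
      rw [ih, zero_mul] at h
      have hB : B.eval (β + 1 + n) ≠ 0 := by
        have := hcon ((n + 1 : ℕ) : ℤ)
        convert this using 2
        push_cast; ring
      have h2 := (mul_eq_zero.1 h).resolve_right hB
      have h3 := (mul_eq_zero.1 h2).resolve_left hlam
      convert h3 using 2
      push_cast; ring
  have hinf : {x | P₀.IsRoot x}.Infinite := by
    apply Set.infinite_of_injective_forall_mem (f := fun n : ℕ => β + 1 + (n : ℂ))
    · intro a b hab
      have : (a : ℂ) = b := add_right_injective _ hab
      exact_mod_cast this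
    · intro n; exact key n
  exact hP₀ (P₀.eq_zero_of_infinite_isRoot hinf)

/-- Let `b = (b₀,…,b_d)` be an integer vector with `b_j > 0` for `j < m` and `b_j < 0` for
`j ≥ m`, and suppose there are an integer vector `c` and a nonzero constant `λ ∈ ℂ` such
that `γ(n) = λ^{-n} · ∏_{j≥m} (-c_j - n b_j - 1)! / ∏_{j<m} (c_j + n b_j)!` is a polynomial
function of `n` for all sufficiently large `n`. Then `max{b_j : j < m} = max{-b_j : j ≥ m}`. -/
theorem max_positive_eq_max_negative_of_polynomial_gamma
    {d m : ℕ} (hm : 0 < m) (hmd : m ≤ d)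
    (b : Fin (d + 1) → ℤ)
    (hbpos : ∀ j : Fin (d + 1), (j : ℕ) < m → 0 < b j)
    (hbneg : ∀ j : Fin (d + 1), m ≤ (j : ℕ) → b j < 0)
    (c : Fin (d + 1) → ℤ) (lam : ℂ) (hlam : lam ≠ 0)
    (γ : ℕ → ℂ)
    (hγ : γ = fun n : ℕ => (lam⁻¹) ^ n *
      (∏ j ∈ Finset.univ.filter (fun j : Fin (d + 1) => m ≤ (j : ℕ)),
        (Nat.factorial ((-c j - (n : ℤ) * b j - 1).toNat) : ℂ)) /
      (∏ j ∈ Finset.univ.filter (fun j : Fin (d + 1) => (j : ℕ) < m),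
        (Nat.factorial ((c j + (n : ℤ) * b j).toNat) : ℂ)))
    (hpoly : ∃ P : Polynomial ℂ, ∀ᶠ n : ℕ in atTop, γ n = P.eval (n : ℂ))
    (hne1 : (Finset.univ.filter (fun j : Fin (d + 1) => (j : ℕ) < m)).Nonempty)
    (hne2 : (Finset.univ.filter (fun j : Fin (d + 1) => m ≤ (j : ℕ))).Nonempty) :
    (Finset.univ.filter (fun j : Fin (d + 1) => (j : ℕ) < m)).sup' hne1 (fun j => b j) =
    (Finset.univ.filter (fun j : Fin (d + 1) => m ≤ (j : ℕ))).sup' hne2 (fun j => - b j) := by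
  classical
  set S1 := Finset.univ.filter (fun j : Fin (d + 1) => (j : ℕ) < m) with hS1
  set S2 := Finset.univ.filter (fun j : Fin (d + 1) => m ≤ (j : ℕ)) with hS2
  have hbS1 : ∀ j ∈ S1, 0 < b j := fun j hj => hbpos j (by simpa [hS1] using hj)
  have hbS2 : ∀ j ∈ S2, b j < 0 := fun j hj => hbneg j (by simpa [hS2] using hj)
  have hγfun : ∀ n : ℕ, γ n = (lam⁻¹) ^ n *
      (∏ j ∈ S2, (Nat.factorial ((-c j - (n : ℤ) * b j - 1).toNat) : ℂ)) /
      (∏ j ∈ S1, (Nat.factorial ((c j + (n : ℤ) * b j).toNat) : ℂ)) := by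
    intro n; rw [hγ]
  obtain ⟨P₀, hP₀ev⟩ := hpoly
  set Q : Polynomial ℂ := ∏ j ∈ S1, ∏ k ∈ Finset.range (b j).toNat,
      (Polynomial.C ((c j : ℂ) + (k : ℂ) + 1) + Polynomial.C ((b j : ℂ)) * Polynomial.X) with hQ
  set P : Polynomial ℂ := ∏ j ∈ S2, ∏ t ∈ Finset.range (-b j).toNat,
      (Polynomial.C ((t : ℂ) - (c j : ℂ)) - Polynomial.C ((b j : ℂ)) * Polynomial.X) with hP
  have hQeval : ∀ x : ℂ, Q.eval x = ∏ j ∈ S1, ∏ k ∈ Finset.range (b j).toNat,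
      ((c j : ℂ) + (k : ℂ) + 1 + (b j : ℂ) * x) := by
    intro x; rw [hQ]; simp [Polynomial.eval_prod]
  have hPeval : ∀ x : ℂ, P.eval x = ∏ j ∈ S2, ∏ t ∈ Finset.range (-b j).toNat,
      ((t : ℂ) - (c j : ℂ) - (b j : ℂ) * x) := by
    intro x; rw [hP]; simp [Polynomial.eval_prod]
  -- eventual nonnegativity threshold
  set N₀ : ℕ := (Finset.univ.sup (fun j : Fin (d + 1) => (c j).natAbs)) + 1 with hN₀def
  have hN₀ : ∀ n : ℕ, N₀ ≤ n → ∀ j : Fin (d + 1),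
      (j ∈ S1 → 0 ≤ c j + (n : ℤ) * b j) ∧ (j ∈ S2 → 0 ≤ -c j - (n : ℤ) * b j - 1) := by
    intro n hn j
    have h1 : (c j).natAbs + 1 ≤ n :=
      le_trans (Nat.succ_le_succ (Finset.le_sup (f := fun j => (c j).natAbs) (Finset.mem_univ j))) hn
    have h2 : ((c j).natAbs : ℤ) + 1 ≤ (n : ℤ) := by exact_mod_cast h1
    constructor
    · intro hj
      have hb1 : 1 ≤ b j := hbS1 j hj
      have h3 : (n : ℤ) * 1 ≤ (n : ℤ) * b j :=
        mul_le_mul_of_nonneg_left hb1 (by positivity)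
      have hA : -(c j) ≤ ((c j).natAbs : ℤ) := by rw [← Int.natAbs_neg]; exact Int.le_natAbs
      linarith
    · intro hj
      have hb1 : b j ≤ -1 := by linarith [hbS2 j hj]
      have h3 : (n : ℤ) * 1 ≤ (n : ℤ) * (-b j) :=
        mul_le_mul_of_nonneg_left (by linarith) (by positivity)
      have hA : c j ≤ ((c j).natAbs : ℤ) := Int.le_natAbs
      have h4 : (n : ℤ) * (-b j) = -((n : ℤ) * b j) := by ring
      rw [h4] at h3
      linarith
  have hQn : ∀ n : ℕ, N₀ ≤ n → Q.eval (n : ℂ) ≠ 0 := by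
    intro n hn
    rw [hQeval]
    apply Finset.prod_ne_zero_iff.2
    intro j hj
    apply Finset.prod_ne_zero_iff.2
    intro k _
    have h1 : 0 ≤ c j + (n : ℤ) * b j := (hN₀ n hn j).1 hj
    have h2 : ((c j + (n : ℤ) * b j + (k : ℤ) + 1 : ℤ) : ℂ) ≠ 0 := by
      have : (c j + (n : ℤ) * b j + (k : ℤ) + 1 : ℤ) ≠ 0 := by omega
      exact_mod_cast this
    convert h2 using 1
    push_cast; ring
  -- the step identity
  have hstep : ∀ n : ℕ, N₀ ≤ n → lam * γ (n + 1) * Q.eval (n : ℂ) = γ n * P.eval (n : ℂ) := by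
    intro n hn
    have hNstep : ∀ j ∈ S2, (Nat.factorial ((-c j - ((n + 1 : ℕ) : ℤ) * b j - 1).toNat) : ℂ) =
        (Nat.factorial ((-c j - (n : ℤ) * b j - 1).toNat) : ℂ) *
          ∏ t ∈ Finset.range (-b j).toNat, ((t : ℂ) - (c j : ℂ) - (b j : ℂ) * (n : ℂ)) := by
      intro j hj
      have h2 : 0 ≤ -c j - (n : ℤ) * b j - 1 := (hN₀ n hn j).2 hj
      have hb : (0 : ℤ) ≤ -b j := by linarith [hbS2 j hj]
      have harg : -c j - ((n + 1 : ℕ) : ℤ) * b j - 1 = (-c j - (n : ℤ) * b j - 1) + (-b j) := by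
        push_cast; ring
      rw [harg, Int.toNat_add h2 hb, fac_add]
      push_cast
      congr 1
      refine Finset.prod_congr rfl (fun t _ => ?_)
      have hcast : (((-c j - (n : ℤ) * b j - 1).toNat : ℤ) : ℂ) =
          ((-c j - (n : ℤ) * b j - 1 : ℤ) : ℂ) := by rw [Int.toNat_of_nonneg h2]
      push_cast at hcast
      linear_combination hcast
    have hDstep : ∀ j ∈ S1, (Nat.factorial ((c j + ((n + 1 : ℕ) : ℤ) * b j).toNat) : ℂ) =
        (Nat.factorial ((c j + (n : ℤ) * b j).toNat) : ℂ) *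
          ∏ k ∈ Finset.range (b j).toNat, ((c j : ℂ) + (k : ℂ) + 1 + (b j : ℂ) * (n : ℂ)) := by
      intro j hj
      have h2 : 0 ≤ c j + (n : ℤ) * b j := (hN₀ n hn j).1 hj
      have hb : (0 : ℤ) ≤ b j := le_of_lt (hbS1 j hj)
      have harg : c j + ((n + 1 : ℕ) : ℤ) * b j = (c j + (n : ℤ) * b j) + b j := by
        push_cast; ring
      rw [harg, Int.toNat_add h2 hb, fac_add]
      push_cast
      congr 1
      refine Finset.prod_congr rfl (fun k _ => ?_)
      have hcast : (((c j + (n : ℤ) * b j).toNat : ℤ) : ℂ) =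
          ((c j + (n : ℤ) * b j : ℤ) : ℂ) := by rw [Int.toNat_of_nonneg h2]
      push_cast at hcast
      linear_combination hcast
    have hNprod : (∏ j ∈ S2, (Nat.factorial ((-c j - ((n + 1 : ℕ) : ℤ) * b j - 1).toNat) : ℂ))
        = (∏ j ∈ S2, (Nat.factorial ((-c j - (n : ℤ) * b j - 1).toNat) : ℂ)) * P.eval (n : ℂ) := by
      rw [hPeval, ← Finset.prod_mul_distrib]
      exact Finset.prod_congr rfl hNstep
    have hDprod : (∏ j ∈ S1, (Nat.factorial ((c j + ((n + 1 : ℕ) : ℤ) * b j).toNat) : ℂ))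
        = (∏ j ∈ S1, (Nat.factorial ((c j + (n : ℤ) * b j).toNat) : ℂ)) * Q.eval (n : ℂ) := by
      rw [hQeval, ← Finset.prod_mul_distrib]
      exact Finset.prod_congr rfl hDstep
    have hD0 : (∏ j ∈ S1, (Nat.factorial ((c j + (n : ℤ) * b j).toNat) : ℂ)) ≠ 0 := by
      apply Finset.prod_ne_zero_iff.2
      intro j _
      exact_mod_cast (Nat.factorial_pos _).ne'
    have hQ0 := hQn n hn
    rw [hγfun, hγfun, hNprod, hDprod, pow_succ]
    field_simp
  -- transfer to P₀
  obtain ⟨N₁, hN₁⟩ := eventually_atTop.1 hP₀ev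
  set N₂ : ℕ := max N₀ N₁ with hN₂def
  have hIdN : ∀ n : ℕ, N₂ ≤ n →
      lam * P₀.eval ((n : ℂ) + 1) * Q.eval (n : ℂ) = P₀.eval (n : ℂ) * P.eval (n : ℂ) := by
    intro n hn
    have h1 := hstep n (le_trans (le_max_left _ _) hn)
    rw [hN₁ n (le_trans (le_max_right _ _) hn),
      hN₁ (n + 1) (le_trans (le_trans (le_max_right _ _) hn) (Nat.le_succ n))] at h1
    have e1 : (((n : ℕ) + 1 : ℕ) : ℂ) = (n : ℂ) + 1 := by push_cast; ring
    rw [e1] at h1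
    exact h1
  have hID : Polynomial.C lam * (P₀.comp (Polynomial.X + Polynomial.C 1)) * Q = P₀ * P := by
    apply Polynomial.eq_of_infinite_eval_eq
    apply Set.infinite_of_injective_forall_mem (f := fun k : ℕ => ((N₂ + k : ℕ) : ℂ))
    · intro a b hab
      have hab' : ((N₂ + a : ℕ) : ℂ) = ((N₂ + b : ℕ) : ℂ) := hab
      have : (N₂ + a : ℕ) = (N₂ + b : ℕ) := by exact_mod_cast hab'
      omega
    · intro k
      simp only [Set.mem_setOf_eq, Polynomial.eval_mul, Polynomial.eval_C,
        Polynomial.eval_comp, Polynomial.eval_add, Polynomial.eval_X, Polynomial.eval_one]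
      exact hIdN (N₂ + k) (Nat.le_add_right _ _)
  have hIdAll : ∀ x : ℂ, lam * P₀.eval (x + 1) * Q.eval x = P₀.eval x * P.eval x := by
    intro x
    have := congrArg (Polynomial.eval x) hID
    simpa [Polynomial.eval_comp] using this
  have hP₀ne : P₀ ≠ 0 := by
    intro h0
    have hg := hN₁ N₁ le_rfl
    rw [h0] at hg
    simp only [Polynomial.eval_zero] at hg
    rw [hγfun] at hg
    have hD0 : (∏ j ∈ S1, (Nat.factorial ((c j + (N₁ : ℤ) * b j).toNat) : ℂ)) ≠ 0 := by
      apply Finset.prod_ne_zero_iff.2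
      intro j _
      exact_mod_cast (Nat.factorial_pos _).ne'
    have hN0 : (∏ j ∈ S2, (Nat.factorial ((-c j - (N₁ : ℤ) * b j - 1).toNat) : ℂ)) ≠ 0 := by
      apply Finset.prod_ne_zero_iff.2
      intro j _
      exact_mod_cast (Nat.factorial_pos _).ne'
    rcases div_eq_zero_iff.1 hg with h | h
    · rcases mul_eq_zero.1 h with h' | h'
      · exact (pow_ne_zero _ (inv_ne_zero hlam)) h'
      · exact hN0 h'
    · exact hD0 h
  -- direction 1
  have dir1 : S1.sup' hne1 (fun j => b j) ≤ S2.sup' hne2 (fun j => -b j) := by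
    obtain ⟨j₀, hj₀S, hj₀⟩ := Finset.exists_mem_eq_sup' hne1 (fun j => b j)
    rw [hj₀]
    have hbpos₀ : 0 < b j₀ := hbS1 j₀ hj₀S
    set r : ℤ := (-c j₀) % (b j₀) with hrdef
    have hr0 : 0 ≤ r := Int.emod_nonneg _ (ne_of_gt hbpos₀)
    have hrlt : r < b j₀ := Int.emod_lt_of_pos _ hbpos₀
    set k₀ : ℕ := r.toNat with hk₀def
    have hk₀r : (k₀ : ℤ) = r := Int.toNat_of_nonneg hr0
    have hk₀mem : k₀ ∈ Finset.range (b j₀).toNat := by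
      rw [Finset.mem_range]; omega
    have hXdef : (c j₀ + (k₀ : ℤ) + 1) = 1 - b j₀ * ((-c j₀) / b j₀) := by
      rw [hk₀r, hrdef, Int.emod_def]; ring
    have hcop : IsCoprime (b j₀) (c j₀ + (k₀ : ℤ) + 1) :=
      ⟨(-c j₀) / b j₀, 1, by rw [hXdef]; ring⟩
    set α : ℂ := -(((c j₀ + (k₀ : ℤ) + 1 : ℤ)) : ℂ) / ((b j₀ : ℤ) : ℂ) with hαdef
    have hbC : ((b j₀ : ℤ) : ℂ) ≠ 0 := by
      exact_mod_cast (ne_of_gt hbpos₀)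
    have hα2 : ((b j₀ : ℤ) : ℂ) * α = -(((c j₀ + (k₀ : ℤ) + 1 : ℤ)) : ℂ) := by
      rw [hαdef]; field_simp
    have hαQ : Q.eval α = 0 := by
      rw [hQeval]
      apply Finset.prod_eq_zero hj₀S
      apply Finset.prod_eq_zero hk₀mem
      have : (c j₀ : ℂ) + (k₀ : ℂ) + 1 + ((b j₀ : ℤ) : ℂ) * α = 0 := by
        rw [hα2]; push_cast; ring
      convert this using 2
    obtain ⟨k, hk⟩ := chase_down P₀ P Q hlam hP₀ne hIdAll α hαQ
    rw [hPeval] at hk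
    obtain ⟨j, hjS, hk2⟩ := Finset.prod_eq_zero_iff.1 hk
    obtain ⟨t, htmem, hk3⟩ := Finset.prod_eq_zero_iff.1 hk2
    have hbj : b j < 0 := hbS2 j hjS
    have h4 : ((b j : ℤ) : ℂ) * (α + (k : ℂ)) = (t : ℂ) - (c j : ℂ) := by
      linear_combination -hk3
    have h5 : ((b j * (-(c j₀ + (k₀ : ℤ) + 1) + k * b j₀) : ℤ) : ℂ) =
        ((b j₀ * ((t : ℤ) - c j) : ℤ) : ℂ) := by
      push_cast
      push_cast at hα2 h4
      linear_combination ((b j₀ : ℤ) : ℂ) * h4 - ((b j : ℤ) : ℂ) * hα2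
    have hZ : b j * (-(c j₀ + (k₀ : ℤ) + 1) + k * b j₀) = b j₀ * ((t : ℤ) - c j) := by
      exact_mod_cast h5
    have hdvd : b j₀ ∣ b j * (c j₀ + (k₀ : ℤ) + 1) :=
      ⟨b j * k - ((t : ℤ) - c j), by linear_combination -hZ⟩
    have hdvd2 : b j₀ ∣ b j := hcop.dvd_of_dvd_mul_right hdvd
    have hle : b j₀ ≤ -b j := Int.le_of_dvd (by linarith) (dvd_neg.2 hdvd2)
    exact le_trans hle (Finset.le_sup' (fun j => -b j) hjS)
  -- direction 2
  have dir2 : S2.sup' hne2 (fun j => -b j) ≤ S1.sup' hne1 (fun j => b j) := by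
    obtain ⟨j₁, hj₁S, hj₁⟩ := Finset.exists_mem_eq_sup' hne2 (fun j => -b j)
    rw [hj₁]
    have hbneg₁ : b j₁ < 0 := hbS2 j₁ hj₁S
    set r : ℤ := (c j₁ + 1) % (-b j₁) with hrdef
    have hr0 : 0 ≤ r := Int.emod_nonneg _ (by omega)
    have hrlt : r < -b j₁ := Int.emod_lt_of_pos _ (by omega)
    set t₀ : ℕ := r.toNat with ht₀def
    have ht₀r : (t₀ : ℤ) = r := Int.toNat_of_nonneg hr0
    have ht₀mem : t₀ ∈ Finset.range (-b j₁).toNat := by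
      rw [Finset.mem_range]; omega
    have hXdef : (t₀ : ℤ) - c j₁ = 1 - (-b j₁) * ((c j₁ + 1) / (-b j₁)) := by
      rw [ht₀r, hrdef, Int.emod_def]; ring
    have hcop : IsCoprime (b j₁) ((t₀ : ℤ) - c j₁) :=
      ⟨-((c j₁ + 1) / (-b j₁)), 1, by rw [hXdef]; ring⟩
    set β : ℂ := (((t₀ : ℤ) - c j₁ : ℤ) : ℂ) / ((b j₁ : ℤ) : ℂ) with hβdef
    have hbC : ((b j₁ : ℤ) : ℂ) ≠ 0 := by
      exact_mod_cast (ne_of_lt hbneg₁)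
    have hβ2 : ((b j₁ : ℤ) : ℂ) * β = (((t₀ : ℤ) - c j₁ : ℤ) : ℂ) := by
      rw [hβdef]; field_simp
    have hβP : P.eval β = 0 := by
      rw [hPeval]
      apply Finset.prod_eq_zero hj₁S
      apply Finset.prod_eq_zero ht₀mem
      have : (t₀ : ℂ) - (c j₁ : ℂ) - ((b j₁ : ℤ) : ℂ) * β = 0 := by
        rw [hβ2]; push_cast; ring
      convert this using 2
    obtain ⟨k, hk⟩ := chase_up P₀ P Q hlam hP₀ne hIdAll β hβP
    rw [hQeval] at hk
    obtain ⟨j, hjS, hk2⟩ := Finset.prod_eq_zero_iff.1 hk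
    obtain ⟨s, hsmem, hk3⟩ := Finset.prod_eq_zero_iff.1 hk2
    have hbj : 0 < b j := hbS1 j hjS
    have h4 : (c j : ℂ) + (s : ℂ) + 1 + ((b j : ℤ) : ℂ) * (β + (k : ℂ)) = 0 := by
      linear_combination hk3
    have h5 : ((b j₁ * (c j + (s : ℤ) + 1) + b j * ((t₀ : ℤ) - c j₁) + b j * k * b j₁ : ℤ) : ℂ)
        = 0 := by
      push_cast
      push_cast at hβ2 h4
      linear_combination ((b j₁ : ℤ) : ℂ) * h4 - ((b j : ℤ) : ℂ) * hβ2
    have hZ : b j₁ * (c j + (s : ℤ) + 1) + b j * ((t₀ : ℤ) - c j₁) + b j * k * b j₁ = 0 := by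
      exact_mod_cast h5
    have hdvd : b j₁ ∣ b j * ((t₀ : ℤ) - c j₁) :=
      ⟨-(c j + (s : ℤ) + 1) - b j * k, by linear_combination hZ⟩
    have hdvd2 : b j₁ ∣ b j := hcop.dvd_of_dvd_mul_right hdvd
    have hle : -b j₁ ≤ b j := Int.le_of_dvd hbj (neg_dvd.2 hdvd2)
    exact le_trans hle (Finset.le_sup' (fun j => b j) hjS)
  exact le_antisymm dir1 dir2
end

section
/- A circuit configuration A (a d × (d+1) integer matrix of rank d whose integer kernel is spanned by a vector b with all coordinates nonzero, and with (1,...,1) in the row span) is balanced if and only if A is affinely isomorphic to an essential Cayley configuration. -/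
open Pointwise

/-- An integer vector is balanced if its positive part is a coordinate permutation of its
negative part, equivalently there is a permutation `σ` with `b ∘ σ = -b`. -/
def BalancedVec {ι : Type*} (b : ι → ℤ) : Prop :=
  ∃ σ : Equiv.Perm ι, ∀ i, b (σ i) = - b i

/-- The point of the Cayley configuration corresponding to the point `p` of the `i`-th
configuration: `(e_i, p) ∈ ℤ^{r+1} × ℤ^r`. -/
def cayleyPoint {r : ℕ} (i : Fin (r + 1)) (p : Fin r → ℤ) : Fin (r + 1) ⊕ Fin r → ℤ :=
  Sum.elim (fun k => if k = i then 1 else 0) p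

/-- The configurations `A₀,…,A_r` in `ℤ^r` (with `Aᵢ` given by the points `a i j`) are
essential: for every proper subset `I` of `{0,…,r}`, the Minkowski sum `Σ_{i∈I} Aᵢ` has
affine dimension at least `|I|`. -/
def IsEssentialCayley {r : ℕ} (n : Fin (r + 1) → ℕ)
    (a : (i : Fin (r + 1)) → Fin (n i) → (Fin r → ℤ)) : Prop :=
  ∀ I : Finset (Fin (r + 1)), I ⊂ Finset.univ →
    I.card ≤ Module.finrank ℚ (vectorSpan ℚ
      (∑ i ∈ I, ((fun p : Fin r → ℤ => fun k => (p k : ℚ)) '' Set.range (a i))))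

def wvec (r : ℕ) (c : Fin (r + 1) → ℤ) (i : Fin (r + 1)) : Fin r → ℤ :=
  fun k => if i = k.castSucc then c k.succ else if i = k.succ then - c k.castSucc else 0

lemma sum_mul_wvec {r : ℕ} (c : Fin (r + 1) → ℤ) (μ : Fin (r + 1) → ℚ) (k : Fin r) :
    ∑ i, μ i * ((wvec r c i k : ℤ) : ℚ)
      = μ k.castSucc * (c k.succ : ℚ) - μ k.succ * (c k.castSucc : ℚ) := by
  have hne : k.castSucc ≠ k.succ := (Fin.castSucc_lt_succ : k.castSucc < k.succ).ne
  have h : ∀ i : Fin (r + 1), μ i * ((wvec r c i k : ℤ) : ℚ)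
      = (if i = k.castSucc then μ i * (c k.succ : ℚ) else 0)
        + (if i = k.succ then μ i * (-(c k.castSucc : ℚ)) else 0) := by
    intro i
    by_cases h1 : i = k.castSucc
    · subst h1; simp [wvec, hne]
    · by_cases h2 : i = k.succ
      · subst h2; simp [wvec, hne.symm, h1]
      · simp [wvec, h1, h2]
  rw [Finset.sum_congr rfl fun i _ => h i, Finset.sum_add_distrib,
    Finset.sum_ite_eq' Finset.univ k.castSucc, Finset.sum_ite_eq' Finset.univ k.succ]
  simp; ring

lemma wvec_chain {r : ℕ} {c : Fin (r + 1) → ℤ} (hc : ∀ i, c i ≠ 0) (μ : Fin (r + 1) → ℚ)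
    (h : ∀ k : Fin r, ∑ i, μ i * ((wvec r c i k : ℤ) : ℚ) = 0) :
    ∀ i, μ i * (c 0 : ℚ) = μ 0 * (c i : ℚ) := by
  have h' : ∀ k : Fin r, μ k.castSucc * (c k.succ : ℚ) = μ k.succ * (c k.castSucc : ℚ) := by
    intro k
    have := h k
    rw [sum_mul_wvec] at this
    linarith
  intro i
  induction i using Fin.induction with
  | zero => rfl
  | succ k ih =>
      have hne : ((c k.castSucc : ℤ) : ℚ) ≠ 0 := by exact_mod_cast hc _
      apply mul_left_cancel₀ hne
      linear_combination (-(c 0 : ℚ)) * h' k + ((c k.succ : ℚ)) * ih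

lemma sum_c_wvec {r : ℕ} (c : Fin (r + 1) → ℤ) (k : Fin r) :
    ∑ i, (c i : ℚ) * ((wvec r c i k : ℤ) : ℚ) = 0 := by
  rw [sum_mul_wvec]; ring

lemma sigma_fin2_sum {M : Type*} [AddCommMonoid M] {m : ℕ} (F : (Σ _ : Fin m, Fin 2) → M) :
    ∑ x, F x = ∑ i, (F ⟨i, 0⟩ + F ⟨i, 1⟩) := by
  rw [← Finset.univ_sigma_univ, Finset.sum_sigma]
  exact Finset.sum_congr rfl fun i _ => Fin.sum_univ_two _

/-- The rational points of the Cayley configuration built from the `wvec` segments. -/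
def Uvec {r : ℕ} (c : Fin (r + 1) → ℤ) (x : Σ _ : Fin (r + 1), Fin 2) :
    Fin (r + 1) ⊕ Fin r → ℚ :=
  fun k => ((cayleyPoint x.1 (if x.2 = 0 then wvec r c x.1 else 0) k : ℤ) : ℚ)

lemma Uvec_inl {r : ℕ} (c : Fin (r + 1) → ℤ) (x : Σ _ : Fin (r + 1), Fin 2)
    (i' : Fin (r + 1)) :
    Uvec c x (Sum.inl i') = if i' = x.1 then 1 else 0 := by
  by_cases h : i' = x.1 <;> simp [Uvec, cayleyPoint, h]

lemma Uvec_inr {r : ℕ} (c : Fin (r + 1) → ℤ) (x : Σ _ : Fin (r + 1), Fin 2) (k : Fin r) :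
    Uvec c x (Sum.inr k) = if x.2 = 0 then ((wvec r c x.1 k : ℤ) : ℚ) else 0 := by
  by_cases h : x.2 = 0 <;> simp [Uvec, cayleyPoint, h]

lemma Uvec_eval_inl {r : ℕ} (c : Fin (r + 1) → ℤ) (h : (Σ _ : Fin (r + 1), Fin 2) → ℚ)
    (i' : Fin (r + 1)) :
    (∑ x, h x • Uvec c x) (Sum.inl i') = h ⟨i', 0⟩ + h ⟨i', 1⟩ := by
  rw [Finset.sum_apply]
  simp only [Pi.smul_apply, smul_eq_mul]
  rw [sigma_fin2_sum (fun x => h x * Uvec c x (Sum.inl i'))]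
  calc ∑ i, (h ⟨i, 0⟩ * Uvec c ⟨i, 0⟩ (Sum.inl i') + h ⟨i, 1⟩ * Uvec c ⟨i, 1⟩ (Sum.inl i'))
      = ∑ i, (if i' = i then h ⟨i, 0⟩ + h ⟨i, 1⟩ else 0) := by
        refine Finset.sum_congr rfl fun i _ => ?_
        by_cases hi : i' = i <;> simp [Uvec_inl, hi] <;> ring
    _ = h ⟨i', 0⟩ + h ⟨i', 1⟩ := by rw [Finset.sum_ite_eq]; simp

lemma Uvec_eval_inr {r : ℕ} (c : Fin (r + 1) → ℤ) (h : (Σ _ : Fin (r + 1), Fin 2) → ℚ)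
    (k : Fin r) :
    (∑ x, h x • Uvec c x) (Sum.inr k) = ∑ i, h ⟨i, 0⟩ * ((wvec r c i k : ℤ) : ℚ) := by
  rw [Finset.sum_apply]
  simp only [Pi.smul_apply, smul_eq_mul]
  rw [sigma_fin2_sum (fun x => h x * Uvec c x (Sum.inr k))]
  refine Finset.sum_congr rfl fun i _ => ?_
  rw [Uvec_inr, Uvec_inr]
  norm_num

lemma Uvec_rel {r : ℕ} (c : Fin (r + 1) → ℤ) :
    ∑ x : (Σ _ : Fin (r + 1), Fin 2),
      (if x.2 = 0 then (c x.1 : ℚ) else -(c x.1 : ℚ)) • Uvec c x = 0 := by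
  funext k
  rcases k with i' | k
  · rw [show ((0 : Fin (r + 1) ⊕ Fin r → ℚ) (Sum.inl i')) = 0 from rfl,
      Uvec_eval_inl c _ i']
    norm_num
  · rw [show ((0 : Fin (r + 1) ⊕ Fin r → ℚ) (Sum.inr k)) = 0 from rfl,
      Uvec_eval_inr c _ k]
    rw [← sum_c_wvec c k]
    refine Finset.sum_congr rfl fun i _ => ?_
    norm_num

lemma Uvec_ker {r : ℕ} {c : Fin (r + 1) → ℤ} (hc : ∀ i, c i ≠ 0)
    (h : (Σ _ : Fin (r + 1), Fin 2) → ℚ) (hh : ∑ x, h x • Uvec c x = 0) :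
    ∀ x, h x * (c 0 : ℚ) = h ⟨0, 0⟩ * (if x.2 = 0 then (c x.1 : ℚ) else -(c x.1 : ℚ)) := by
  have hA : ∀ i, h ⟨i, 0⟩ + h ⟨i, 1⟩ = 0 := by
    intro i
    have := congrFun hh (Sum.inl i)
    rwa [Uvec_eval_inl] at this
  have hB : ∀ k, ∑ i, (fun i => h ⟨i, 0⟩) i * ((wvec r c i k : ℤ) : ℚ) = 0 := by
    intro k
    have := congrFun hh (Sum.inr k)
    rwa [Uvec_eval_inr] at this
  have hC := wvec_chain hc (fun i => h ⟨i, 0⟩) hB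
  rintro ⟨i, s⟩
  have hs : ∀ t : Fin 2, t = 0 ∨ t = 1 := by decide
  rcases hs s with rfl | rfl
  · simpa using hC i
  · have h1 : h ⟨i, 0⟩ * ((c 0 : ℤ) : ℚ) = h ⟨0, 0⟩ * ((c i : ℤ) : ℚ) := hC i
    have h2 := hA i
    rw [if_neg (by decide : ¬((1 : Fin 2) = (0 : Fin 2)))]
    linear_combination ((c 0 : ℤ) : ℚ) * h2 - h1

lemma essential_of_wvec {r : ℕ} (c : Fin (r + 1) → ℤ) (hc : ∀ i, c i ≠ 0) :
    IsEssentialCayley (fun _ => 2)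
      (fun i (s : Fin 2) => if s = 0 then wvec r c i else 0) := by
  classical
  intro I hI
  obtain ⟨i0, -, hi0⟩ := Finset.exists_of_ssubset hI
  set img : Fin (r + 1) → Set (Fin r → ℚ) := fun i =>
    ((fun p : Fin r → ℤ => fun k => (p k : ℚ)) ''
      Set.range ((fun i (s : Fin 2) => if s = 0 then wvec r c i else 0) i)) with himg
  set Wq : Fin (r + 1) → (Fin r → ℚ) := fun i k => ((wvec r c i k : ℤ) : ℚ) with hWq
  have hWmem : ∀ i, Wq i ∈ img i := by
    intro i
    exact ⟨wvec r c i, ⟨(0 : Fin 2), by simp⟩, rfl⟩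
  have h0mem : ∀ i, (0 : Fin r → ℚ) ∈ img i := by
    intro i
    refine ⟨0, ⟨(1 : Fin 2), by simp⟩, by funext k; simp⟩
  have hWI : ∀ i1 ∈ I, Wq i1 ∈ vectorSpan ℚ (∑ i ∈ I, img i) := by
    intro i1 hi1
    have hx1 : ∑ i ∈ I, (if i = i1 then Wq i else 0) ∈ ∑ i ∈ I, img i := by
      refine Set.finset_sum_mem_finset_sum I img _ fun i hi => ?_
      by_cases h : i = i1
      · rw [if_pos h]; exact hWmem i
      · rw [if_neg h]; exact h0mem i
    have hx0 : (0 : Fin r → ℚ) ∈ ∑ i ∈ I, img i := by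
      have := Set.finset_sum_mem_finset_sum I img (fun _ => 0) fun i _ => h0mem i
      simpa using this
    have := vsub_mem_vectorSpan ℚ hx1 hx0
    rw [vsub_eq_sub, sub_zero, Finset.sum_ite_eq' I i1, if_pos hi1] at this
    exact this
  have hind : LinearIndependent ℚ (fun x : ↥I => Wq ↑x) := by
    rw [Fintype.linearIndependent_iff]
    intro g hg
    set μ : Fin (r + 1) → ℚ := fun i => if h : i ∈ I then g ⟨i, h⟩ else 0 with hμ
    have hμsum : ∀ k, ∑ i, μ i * ((wvec r c i k : ℤ) : ℚ) = 0 := by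
      intro k
      have h1 := congrFun hg k
      rw [Finset.sum_apply] at h1
      simp only [Pi.smul_apply, smul_eq_mul, Pi.zero_apply] at h1
      calc ∑ i, μ i * ((wvec r c i k : ℤ) : ℚ)
          = ∑ i ∈ I, μ i * Wq i k := by
            refine (Finset.sum_subset (Finset.subset_univ I) fun i _ hi => ?_).symm
            rw [show μ i = 0 from dif_neg hi, zero_mul]
        _ = ∑ x : ↥I, μ ↑x * Wq ↑x k := (Finset.sum_coe_sort I fun i => μ i * Wq i k).symm
        _ = ∑ x : ↥I, g x * Wq ↑x k := by
            refine Finset.sum_congr rfl fun x _ => ?_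
            rw [show μ ↑x = g x from dif_pos x.2]
        _ = 0 := h1
    have hchain := wvec_chain hc μ hμsum
    have hμi0 : μ i0 = 0 := dif_neg hi0
    have hci0 : ((c i0 : ℤ) : ℚ) ≠ 0 := by exact_mod_cast hc i0
    have hc0 : ((c 0 : ℤ) : ℚ) ≠ 0 := by exact_mod_cast hc 0
    have hμ0 : μ 0 = 0 := by
      have := hchain i0
      rw [hμi0, zero_mul] at this
      rcases mul_eq_zero.mp this.symm with h | h
      · exact h
      · exact absurd h hci0
    intro x
    have h2 := hchain ↑x
    rw [hμ0, zero_mul] at h2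
    rcases mul_eq_zero.mp h2 with h | h
    · rw [← show μ ↑x = g x from dif_pos x.2]; exact h
    · exact absurd h hc0
  have hspan : Submodule.span ℚ (Set.range (fun x : ↥I => Wq ↑x))
      ≤ vectorSpan ℚ (∑ i ∈ I, img i) := by
    rw [Submodule.span_le]
    rintro _ ⟨x, rfl⟩
    exact hWI ↑x x.2
  calc I.card = Fintype.card ↥I := (Fintype.card_coe I).symm
    _ = Module.finrank ℚ (Submodule.span ℚ (Set.range (fun x : ↥I => Wq ↑x))) :=
        (finrank_span_eq_card hind).symm
    _ ≤ Module.finrank ℚ (vectorSpan ℚ (∑ i ∈ I, img i)) := Submodule.finrank_mono hspan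

lemma sum_extend {M : Type*} [AddCommGroup M] [Module ℚ M] {m : ℕ} (j0 : Fin m)
    (g : {j : Fin m // j ≠ j0} → ℚ) (F : Fin m → M) :
    ∑ j, (if h : j ≠ j0 then g ⟨j, h⟩ else 0) • F j
      = ∑ x : {j : Fin m // j ≠ j0}, g x • F ↑x := by
  classical
  rw [← Finset.add_sum_erase _ _ (Finset.mem_univ j0), dif_neg (fun h => h rfl), zero_smul,
    zero_add,
    Finset.sum_subtype (Finset.univ.erase j0) (p := fun j => j ≠ j0) (by simp)
      (fun j => (if h : j ≠ j0 then g ⟨j, h⟩ else 0) • F j)]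
  exact Finset.sum_congr rfl fun x _ => by rw [dif_pos x.2]

lemma range_eq_single_of_card_one {α : Type*} {m : ℕ} (h : m = 1) (f : Fin m → α) :
    Set.range f = {f ⟨0, h ▸ Nat.one_pos⟩} := by
  apply Set.eq_singleton_iff_unique_mem.mpr
  refine ⟨Set.mem_range_self _, ?_⟩
  rintro x ⟨s, rfl⟩
  have hs : s = ⟨0, h ▸ Nat.one_pos⟩ := Fin.ext (by have := s.isLt; omega)
  rw [hs]

lemma sigma_fin_ext {r : ℕ} {n : Fin (r + 1) → ℕ} (x y : Σ i, Fin (n i))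
    (h1 : x.1 = y.1) (h2 : (x.2 : ℕ) = (y.2 : ℕ)) : x = y := by
  obtain ⟨i, s⟩ := x
  obtain ⟨i', s'⟩ := y
  dsimp at h1
  subst h1
  simp only [Sigma.mk.inj_iff, heq_eq_eq, true_and]
  exact Fin.ext h2

/-- A circuit configuration (a `d × (d+1)` integer matrix of rank `d`, with `(1,…,1)` in
its row span, whose kernel is spanned by a vector `b` with all coordinates nonzero) is
balanced if and only if it is affinely isomorphic (via an element of `GL(d,ℚ)` and a
relabeling of points) to an essential Cayley configuration. -/
theorem circuit_balanced_iff_essential_cayley {d : ℕ}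
    (A : Matrix (Fin d) (Fin (d + 1)) ℤ)
    (hrank : (A.map (fun x : ℤ => (x : ℚ))).rank = d)
    (hrow : ∃ w : Fin d → ℚ, ∀ j, ∑ i, w i * (A i j : ℚ) = 1)
    (b : Fin (d + 1) → ℤ) (hbnz : ∀ j, b j ≠ 0) (hbker : A.mulVec b = 0)
    (hker : ∀ v : Fin (d + 1) → ℚ,
      (A.map (fun x : ℤ => (x : ℚ))).mulVec v = 0 → ∃ t : ℚ, v = t • fun j => (b j : ℚ)) :
    BalancedVec b ↔
      ∃ (r : ℕ) (n : Fin (r + 1) → ℕ) (a : (i : Fin (r + 1)) → Fin (n i) → (Fin r → ℤ)),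
        IsEssentialCayley n a ∧
        ∃ (e : Fin (d + 1) ≃ (Σ i : Fin (r + 1), Fin (n i)))
          (L : (Fin d → ℚ) ≃ₗ[ℚ] (Fin (r + 1) ⊕ Fin r → ℚ)),
          ∀ j : Fin (d + 1),
            L (fun i => (A i j : ℚ)) =
              fun k => (cayleyPoint (e j).1 (a (e j).1 (e j).2) k : ℚ) := by
  classical
  constructor
  · rintro ⟨σ, hσ⟩
    classical
    have hAb : ∀ i, ∑ j, (A i j : ℚ) * (b j : ℚ) = 0 := by
      intro i
      have h0 : ∑ j, A i j * b j = 0 := by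
        have := congrFun hbker i
        simpa [Matrix.mulVec, dotProduct] using this
      exact_mod_cast h0
    have hsumb : ∑ j, (b j : ℚ) = 0 := by
      obtain ⟨w, hw⟩ := hrow
      calc ∑ j, (b j : ℚ)
          = ∑ j, (∑ i, w i * (A i j : ℚ)) * (b j : ℚ) :=
            Finset.sum_congr rfl fun j _ => by rw [hw j, one_mul]
        _ = ∑ j, ∑ i, w i * ((A i j : ℚ) * (b j : ℚ)) := by
            refine Finset.sum_congr rfl fun j _ => ?_
            rw [Finset.sum_mul]
            exact Finset.sum_congr rfl fun i _ => by ring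
        _ = ∑ i, ∑ j, w i * ((A i j : ℚ) * (b j : ℚ)) := Finset.sum_comm
        _ = ∑ i, w i * ∑ j, (A i j : ℚ) * (b j : ℚ) := by
            exact Finset.sum_congr rfl fun i _ => (Finset.mul_sum _ _ _).symm
        _ = 0 := by simp [hAb]
    -- the positive and negative parts
    set P : Finset (Fin (d + 1)) := Finset.univ.filter (fun j => 0 < b j) with hP
    set N : Finset (Fin (d + 1)) := Finset.univ.filter (fun j => b j < 0) with hN
    have hmemP : ∀ j, j ∈ P ↔ 0 < b j := by intro j; simp [hP]
    have hmemN : ∀ j, j ∈ N ↔ b j < 0 := by intro j; simp [hN]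
    have hdisj : Disjoint P N := by
      rw [Finset.disjoint_left]
      intro j hjP hjN
      rw [hmemP] at hjP
      rw [hmemN] at hjN
      omega
    have huni : P ∪ N = Finset.univ := by
      ext j
      simp only [Finset.mem_union, Finset.mem_univ, iff_true, hmemP, hmemN]
      have := hbnz j
      omega
    have hcardsum : P.card + N.card = d + 1 := by
      rw [← Finset.card_union_of_disjoint hdisj, huni, Finset.card_univ, Fintype.card_fin]
    have hPN : ∀ j ∈ P, σ j ∈ N := by
      intro j hj
      rw [hmemP] at hj
      rw [hmemN, hσ]
      omega
    have hNP : ∀ j ∈ N, σ j ∈ P := by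
      intro j hj
      rw [hmemN] at hj
      rw [hmemP, hσ]
      omega
    have hcardeq : P.card = N.card :=
      le_antisymm (Finset.card_le_card_of_injOn σ hPN (σ.injective.injOn))
        (Finset.card_le_card_of_injOn σ hNP (σ.injective.injOn))
    have hPne : P.Nonempty := by
      rw [Finset.nonempty_iff_ne_empty]
      intro hcon
      have hneg : ∀ j : Fin (d + 1), (b j : ℚ) < 0 := by
        intro j
        have h1 : j ∉ P := by rw [hcon]; exact Finset.notMem_empty j
        rw [hmemP] at h1
        have := hbnz j
        have : b j < 0 := by omega
        exact_mod_cast this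
      have := Finset.sum_neg (fun j _ => hneg j) Finset.univ_nonempty
      rw [hsumb] at this
      exact lt_irrefl 0 this
    obtain ⟨r, hr⟩ : ∃ r, P.card = r + 1 := by
      have := Finset.card_pos.mpr hPne
      exact ⟨P.card - 1, by omega⟩
    have hd2 : d = 2 * r + 1 := by omega
    -- enumerate P
    let p : Fin (r + 1) → Fin (d + 1) := fun i => ((P.orderIsoOfFin hr) i : Fin (d + 1))
    have hpinj : Function.Injective p := fun i i' h =>
      (P.orderIsoOfFin hr).injective (Subtype.ext h)
    have hpP : ∀ i, p i ∈ P := fun i => ((P.orderIsoOfFin hr) i).2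
    let c : Fin (r + 1) → ℤ := fun i => b (p i)
    have hcpos : ∀ i, 0 < c i := fun i => (hmemP (p i)).mp (hpP i)
    have hcne : ∀ i, c i ≠ 0 := fun i => (hcpos i).ne'
    -- the pairing map
    let f : (Σ _ : Fin (r + 1), Fin 2) → Fin (d + 1) :=
      fun x => if x.2 = 0 then p x.1 else σ (p x.1)
    have hfin2 : ∀ t : Fin 2, t = 0 ∨ t = 1 := by decide
    have hf0 : ∀ i, f ⟨i, 0⟩ = p i := fun i => rfl
    have hf1 : ∀ i, f ⟨i, 1⟩ = σ (p i) := fun i => rfl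
    have hbf : ∀ x : (Σ _ : Fin (r + 1), Fin 2),
        (b (f x) : ℚ) = if x.2 = 0 then (c x.1 : ℚ) else -(c x.1 : ℚ) := by
      rintro ⟨i, s⟩
      rcases hfin2 s with rfl | rfl
      · rw [if_pos rfl, hf0]
      · rw [if_neg (by decide : ¬((1 : Fin 2) = 0)), hf1, hσ]
        push_cast
        rfl
    have hfinj : Function.Injective f := by
      rintro ⟨i, s⟩ ⟨i', s'⟩ h
      have hbPi : 0 < b (p i) := (hmemP (p i)).mp (hpP i)
      have hbPi' : 0 < b (p i') := (hmemP (p i')).mp (hpP i')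
      rcases hfin2 s with rfl | rfl <;> rcases hfin2 s' with rfl | rfl
      · rw [hf0, hf0] at h
        rw [hpinj h]
      · rw [hf0, hf1] at h
        have : b (p i) = - b (p i') := by rw [h, hσ]
        exact absurd this (by omega)
      · rw [hf1, hf0] at h
        have : b (p i') = - b (p i) := by rw [← h, hσ]
        exact absurd this (by omega)
      · rw [hf1, hf1] at h
        rw [hpinj (σ.injective h)]
    have hfbij : Function.Bijective f := by
      refine (Fintype.bijective_iff_injective_and_card f).mpr ⟨hfinj, ?_⟩
      rw [Fintype.card_sigma, Fintype.card_fin]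
      simp only [Fintype.card_fin, Finset.sum_const, Finset.card_univ, Fintype.card_fin,
        smul_eq_mul]
      omega
    let eqv : (Σ _ : Fin (r + 1), Fin 2) ≃ Fin (d + 1) := Equiv.ofBijective f hfbij
    have hfe : ∀ j, f (eqv.symm j) = j := fun j => eqv.apply_symm_apply j
    have hef : ∀ x, eqv.symm (f x) = x := fun x => eqv.symm_apply_apply x
    -- the vector families
    let v : Fin (d + 1) → (Fin d → ℚ) := fun j => fun i => (A i j : ℚ)
    let u : Fin (d + 1) → (Fin (r + 1) ⊕ Fin r → ℚ) := fun j => Uvec c (eqv.symm j)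
    have hvrel : ∑ j, (b j : ℚ) • v j = 0 := by
      funext i
      rw [Finset.sum_apply]
      simp only [Pi.smul_apply, smul_eq_mul, Pi.zero_apply]
      rw [← hAb i]
      exact Finset.sum_congr rfl fun j _ => mul_comm _ _
    have hurel : ∑ j, (b j : ℚ) • u j = 0 := by
      calc ∑ j, (b j : ℚ) • u j
          = ∑ j, (fun x => (if x.2 = 0 then (c x.1 : ℚ) else -(c x.1 : ℚ)) • Uvec c x)
              (eqv.symm j) := by
            refine Finset.sum_congr rfl fun j _ => ?_
            have h1 : (b j : ℚ) = (if (eqv.symm j).2 = 0 then (c (eqv.symm j).1 : ℚ)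
                else -(c (eqv.symm j).1 : ℚ)) := by
              rw [← hbf (eqv.symm j), hfe j]
            dsimp only
            rw [← h1]
        _ = ∑ x, (if x.2 = 0 then (c x.1 : ℚ) else -(c x.1 : ℚ)) • Uvec c x :=
            Equiv.sum_comp eqv.symm
              (fun x => (if x.2 = 0 then (c x.1 : ℚ) else -(c x.1 : ℚ)) • Uvec c x)
        _ = 0 := Uvec_rel c
    -- the distinguished column
    let j0 : Fin (d + 1) := p 0
    have hbj0 : (b j0 : ℚ) = (c 0 : ℚ) := rfl
    have hbj0ne : (b j0 : ℚ) ≠ 0 := by exact_mod_cast hbnz j0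
    have hc0ne : ((c 0 : ℤ) : ℚ) ≠ 0 := by exact_mod_cast hcne 0
    haveI hne : Nonempty {j : Fin (d + 1) // j ≠ j0} := by
      refine ⟨⟨σ (p 0), fun hcon => ?_⟩⟩
      have h1 : b (σ (p 0)) = - b (p 0) := hσ _
      have h2 : 0 < b (p 0) := (hmemP (p 0)).mp (hpP 0)
      rw [hcon] at h1
      have : b j0 = b (p 0) := rfl
      omega
    have hcardι : Fintype.card {j : Fin (d + 1) // j ≠ j0} = d := by
      simp [Fintype.card_subtype_compl, Fintype.card_subtype_eq]
    have hj0f : f ⟨0, 0⟩ = j0 := rfl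
    -- linear independence of the column family minus j0
    have hvind : LinearIndependent ℚ (fun x : {j : Fin (d + 1) // j ≠ j0} => v ↑x) := by
      rw [Fintype.linearIndependent_iff]
      intro g hg
      have hs0 : ∑ j, (if h : j ≠ j0 then g ⟨j, h⟩ else 0) • v j = 0 :=
        (sum_extend j0 g v).trans hg
      have hmv : (A.map (fun x : ℤ => (x : ℚ))).mulVec
          (fun j => if h : j ≠ j0 then g ⟨j, h⟩ else 0) = 0 := by
        funext i
        show ∑ j, (A i j : ℚ) * (if h : j ≠ j0 then g ⟨j, h⟩ else 0) = 0
        have h2 := congrFun hs0 i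
        rw [Finset.sum_apply] at h2
        simp only [Pi.smul_apply, smul_eq_mul, Pi.zero_apply] at h2
        have h3 : ∑ j, (A i j : ℚ) * (if h : j ≠ j0 then g ⟨j, h⟩ else 0)
            = ∑ j, (if h : j ≠ j0 then g ⟨j, h⟩ else 0) * (A i j : ℚ) :=
          Finset.sum_congr rfl fun j _ => mul_comm _ _
        rw [h3]
        exact h2
      obtain ⟨t, ht⟩ := hker _ hmv
      have h3 : (if h : j0 ≠ j0 then g ⟨j0, h⟩ else 0) = t * (b j0 : ℚ) := by
        have := congrFun ht j0
        simpa using this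
      rw [dif_neg (fun h => h rfl)] at h3
      have ht0 : t = 0 := by
        rcases mul_eq_zero.mp h3.symm with h | h
        · exact h
        · exact absurd h hbj0ne
      intro x
      have h4 := congrFun ht ↑x
      rw [dif_pos x.2] at h4
      simpa [ht0] using h4
    have huind : LinearIndependent ℚ (fun x : {j : Fin (d + 1) // j ≠ j0} => u ↑x) := by
      rw [Fintype.linearIndependent_iff]
      intro g hg
      have hs0 : ∑ j, (if h : j ≠ j0 then g ⟨j, h⟩ else 0) • u j = 0 :=
        (sum_extend j0 g u).trans hg
      have hU0 : ∑ x, (fun x => if h : f x ≠ j0 then g ⟨f x, h⟩ else 0) x • Uvec c x = 0 := by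
        rw [← Equiv.sum_comp eqv.symm
          (fun x => (if h : f x ≠ j0 then g ⟨f x, h⟩ else 0) • Uvec c x)]
        rw [← hs0]
        refine Finset.sum_congr rfl fun j _ => ?_
        rw [hfe j]
      have hK := Uvec_ker hcne _ hU0
      have h00 : (if h : f (⟨0, 0⟩ : Σ _ : Fin (r + 1), Fin 2) ≠ j0
          then g ⟨f ⟨0, 0⟩, h⟩ else 0) = 0 := by
        rw [dif_neg]
        rw [hj0f]
        exact fun h => h rfl
      intro x
      have h5 := hK (eqv.symm ↑x)
      rw [h00, zero_mul] at h5
      have h6 : (if h : f (eqv.symm ↑x) ≠ j0 then g ⟨f (eqv.symm ↑x), h⟩ else 0) = 0 := by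
        rcases mul_eq_zero.mp h5 with h | h
        · exact h
        · exact absurd h hc0ne
      rw [hfe ↑x, dif_pos x.2] at h6
      exact h6
    -- build the linear equivalence from the two bases
    have hcardv : Fintype.card {j : Fin (d + 1) // j ≠ j0}
        = Module.finrank ℚ (Fin d → ℚ) := by
      rw [Module.finrank_pi, Fintype.card_fin, hcardι]
    have hcardu : Fintype.card {j : Fin (d + 1) // j ≠ j0}
        = Module.finrank ℚ (Fin (r + 1) ⊕ Fin r → ℚ) := by
      rw [Module.finrank_pi, Fintype.card_sum, Fintype.card_fin, Fintype.card_fin, hcardι, hd2]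
      ring
    let Bv := basisOfLinearIndependentOfCardEqFinrank hvind hcardv
    let Bu := basisOfLinearIndependentOfCardEqFinrank huind hcardu
    let L : (Fin d → ℚ) ≃ₗ[ℚ] (Fin (r + 1) ⊕ Fin r → ℚ) :=
      Bv.equiv Bu (Equiv.refl _)
    have hLb : ∀ x : {j : Fin (d + 1) // j ≠ j0}, L (v ↑x) = u ↑x := by
      intro x
      have h1 : v ↑x = Bv x :=
        (congrFun (coe_basisOfLinearIndependentOfCardEqFinrank hvind hcardv) x).symm
      have h2 : Bu x = u ↑x :=
        congrFun (coe_basisOfLinearIndependentOfCardEqFinrank huind hcardu) x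
      rw [h1]
      show (Bv.equiv Bu (Equiv.refl _)) (Bv x) = u ↑x
      rw [Module.Basis.equiv_apply, Equiv.refl_apply, h2]
    have hLv : ∀ j, L (v j) = u j := by
      intro j
      by_cases hj : j = j0
      · subst hj
        have hvs : (b j0 : ℚ) • v j0 = - ∑ j' ∈ Finset.univ.erase j0, (b j' : ℚ) • v j' := by
          have h1 := hvrel
          rw [← Finset.add_sum_erase _ (fun j' => (b j' : ℚ) • v j') (Finset.mem_univ j0)] at h1
          exact eq_neg_of_add_eq_zero_left h1
        have hus : (b j0 : ℚ) • u j0 = - ∑ j' ∈ Finset.univ.erase j0, (b j' : ℚ) • u j' := by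
          have h1 := hurel
          rw [← Finset.add_sum_erase _ (fun j' => (b j' : ℚ) • u j') (Finset.mem_univ j0)] at h1
          exact eq_neg_of_add_eq_zero_left h1
        have h2 : (b j0 : ℚ) • L (v j0) = (b j0 : ℚ) • u j0 := by
          calc (b j0 : ℚ) • L (v j0) = L ((b j0 : ℚ) • v j0) := (map_smul L _ _).symm
            _ = L (- ∑ j' ∈ Finset.univ.erase j0, (b j' : ℚ) • v j') := by rw [hvs]
            _ = - ∑ j' ∈ Finset.univ.erase j0, (b j' : ℚ) • L (v j') := by
                rw [map_neg, map_sum]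
                congr 1
                exact Finset.sum_congr rfl fun j' _ => map_smul L _ _
            _ = - ∑ j' ∈ Finset.univ.erase j0, (b j' : ℚ) • u j' := by
                congr 1
                refine Finset.sum_congr rfl fun j' hj' => ?_
                rw [hLb ⟨j', (Finset.mem_erase.mp hj').1⟩]
            _ = (b j0 : ℚ) • u j0 := hus.symm
        exact smul_right_injective _ hbj0ne h2
      · exact hLb ⟨j, hj⟩
    -- assemble
    refine ⟨r, fun _ => 2, fun i (s : Fin 2) => if s = 0 then wvec r c i else 0,
      essential_of_wvec c hcne, eqv.symm, L, ?_⟩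
    intro j
    exact hLv j
  · rintro ⟨r, n, a, hess, e, L, hL⟩
    classical
    have hAb : ∀ i, ∑ j, (A i j : ℚ) * (b j : ℚ) = 0 := by
      intro i
      have h0 : ∑ j, A i j * b j = 0 := by
        have := congrFun hbker i
        simpa [Matrix.mulVec, dotProduct] using this
      exact_mod_cast h0
    -- d = 2r+1
    have hd : d = 2 * r + 1 := by
      have h1 := LinearEquiv.finrank_eq L
      rw [Module.finrank_pi, Module.finrank_pi] at h1
      simp [Fintype.card_sum] at h1
      omega
    -- sum of n i
    have hsn : ∑ i, n i = d + 1 := by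
      have := Fintype.card_congr e
      simpa [Fintype.card_sigma] using this.symm
    set cay : Fin (d + 1) → (Fin (r + 1) ⊕ Fin r → ℚ) :=
      fun j => fun k => ((cayleyPoint (e j).1 (a (e j).1 (e j).2) k : ℤ) : ℚ) with hcay
    clear_value cay
    have hrel : ∑ j, (b j : ℚ) • cay j = 0 := by
      have h1 : ∑ j, (b j : ℚ) • (fun i => (A i j : ℚ)) = (0 : Fin d → ℚ) := by
        funext i
        simpa [Finset.sum_apply, mul_comm] using hAb i
      calc ∑ j, (b j : ℚ) • cay j = ∑ j, (b j : ℚ) • L (fun i => (A i j : ℚ)) := by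
            refine Finset.sum_congr rfl fun j _ => ?_
            rw [hL j, hcay]
        _ = L (∑ j, (b j : ℚ) • (fun i => (A i j : ℚ))) := by
            rw [map_sum]
            refine Finset.sum_congr rfl fun j _ => ?_
            rw [map_smul]
        _ = 0 := by rw [h1]; simp
    have hfib : ∀ i : Fin (r + 1),
        ∑ j ∈ Finset.univ.filter (fun j => (e j).1 = i), (b j : ℚ) = 0 := by
      intro i
      have h1 := congrFun hrel (Sum.inl i)
      rw [Finset.sum_apply] at h1
      simp only [Pi.zero_apply] at h1
      calc ∑ j ∈ Finset.univ.filter (fun j => (e j).1 = i), (b j : ℚ)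
          = ∑ j, ((b j : ℚ) • cay j) (Sum.inl i) := by
            rw [Finset.sum_filter]
            refine Finset.sum_congr rfl fun j _ => ?_
            have hc : ((b j : ℚ) • cay j) (Sum.inl i)
                = (b j : ℚ) * (if i = (e j).1 then 1 else 0) := by
              by_cases h : i = (e j).1 <;> simp [hcay, cayleyPoint, h]
            rw [hc]
            by_cases h : (e j).1 = i
            · rw [if_pos h, if_pos h.symm, mul_one]
            · rw [if_neg h, if_neg (fun h' => h h'.symm), mul_zero]
        _ = 0 := h1
    -- every n i = 2
    have h2 : ∀ i, n i = 2 := by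
      rcases Nat.eq_zero_or_pos r with hr | hr
      · subst hr
        intro i
        have hi0 : i = 0 := Fin.ext (by omega)
        subst hi0
        have hn0 : n 0 = d + 1 := by
          have h6 : ∀ x : Fin (0 + 1), x = 0 := fun x => Fin.ext (by have := x.isLt; omega)
          calc n 0 = ∑ i, n i :=
                (Finset.sum_eq_single_of_mem (0 : Fin (0 + 1)) (Finset.mem_univ _)
                  (fun x _ hx => absurd (h6 x) hx)).symm
            _ = d + 1 := hsn
        omega
      · have hge : ∀ i, 2 ≤ n i := by
          intro i
          have hss : ({i} : Finset (Fin (r + 1))) ⊂ Finset.univ := by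
            rw [Finset.ssubset_univ_iff]
            intro hcon
            have := Finset.card_univ (α := Fin (r + 1))
            rw [← hcon] at this
            simp at this
            omega
          have := hess {i} hss
          rw [Finset.sum_singleton, Finset.card_singleton] at this
          by_contra hlt
          push_neg at hlt
          have : n i = 0 ∨ n i = 1 := by
            clear this hss
            omega
          rcases this with hni | hni
          · have hre : Set.range (a i) = ∅ := by
              rw [Set.range_eq_empty_iff, hni]
              infer_instance
            rw [hre] at this
            simp [vectorSpan_empty] at this
          · rw [range_eq_single_of_card_one hni (a i), Set.image_singleton] at this
            simp [vectorSpan_singleton] at this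
        intro i
        by_contra hne
        have hgt : 2 < n i := lt_of_le_of_ne (hge i) (Ne.symm hne)
        have hsplit : ∑ i', n i' = n i + ∑ i' ∈ Finset.univ.erase i, n i' :=
          (Finset.add_sum_erase _ _ (Finset.mem_univ i)).symm
        have hrest : 2 * r ≤ ∑ i' ∈ Finset.univ.erase i, n i' := by
          calc 2 * r = ∑ _i' ∈ Finset.univ.erase i, 2 := by
                rw [Finset.sum_const, Finset.card_erase_of_mem (Finset.mem_univ i)]
                simp [mul_comm]
            _ ≤ _ := Finset.sum_le_sum fun i' _ => hge i'
        omega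
    -- the flip involution
    have hlt2 : ∀ j : Fin (d + 1), ((e j).2 : ℕ) < 2 := by
      intro j
      have h3 := (e j).2.isLt
      have h4 := h2 (e j).1
      omega
    let otherF : ∀ i : Fin (r + 1), Fin (n i) → Fin (n i) := fun i s =>
      ⟨n i - 1 - (s : ℕ), lt_of_le_of_lt (Nat.sub_le _ _)
        (Nat.sub_lt (Nat.lt_of_le_of_lt (Nat.zero_le _) s.isLt) Nat.one_pos)⟩
    let g : Fin (d + 1) → Fin (d + 1) := fun j => e.symm ⟨(e j).1, otherF _ (e j).2⟩
    have hgval : ∀ j, e (g j) = ⟨(e j).1, otherF _ (e j).2⟩ := by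
      intro j
      simp [g]
    have hginv : Function.Involutive g := by
      intro j
      have h1 : e (g (g j)) = e j := by
        rw [hgval, hgval]
        refine sigma_fin_ext _ _ rfl ?_
        show n (e j).1 - 1 - (n (e j).1 - 1 - ((e j).2 : ℕ)) = ((e j).2 : ℕ)
        have := (e j).2.isLt
        omega
      exact e.injective h1
    have hbg : ∀ j, b (g j) = - b j := by
      intro j
      have hjne : j ≠ g j := by
        intro hcon
        have h1 : e j = e (g j) := congrArg e hcon
        rw [hgval] at h1
        have h5 : ((e j).2 : ℕ) = n (e j).1 - 1 - ((e j).2 : ℕ) :=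
          congrArg (fun x : (Σ i, Fin (n i)) => (x.2 : ℕ)) h1
        have h3 := hlt2 j
        have h4 := h2 (e j).1
        omega
      have hfilter : Finset.univ.filter (fun x => (e x).1 = (e j).1) = {j, g j} := by
        ext x
        simp only [Finset.mem_filter, Finset.mem_univ, true_and, Finset.mem_insert,
          Finset.mem_singleton]
        constructor
        · intro hx
          have hvx : ((e x).2 : ℕ) < 2 := hlt2 x
          have hvj : ((e j).2 : ℕ) < 2 := hlt2 j
          have h4 := h2 (e j).1
          have hgj : e (g j) = ⟨(e j).1, otherF _ (e j).2⟩ := hgval j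
          by_cases hcase : ((e x).2 : ℕ) = ((e j).2 : ℕ)
          · exact Or.inl (e.injective (sigma_fin_ext _ _ hx hcase))
          · right
            apply e.injective
            refine sigma_fin_ext _ _ ?_ ?_
            · rw [hgj]; exact hx
            · rw [hgj]
              show ((e x).2 : ℕ) = n (e j).1 - 1 - ((e j).2 : ℕ)
              omega
        · rintro (rfl | rfl)
          · rfl
          · rw [hgval]
      have hsum := hfib (e j).1
      rw [hfilter, Finset.sum_pair hjne] at hsum
      have : (b j : ℚ) + (b (g j) : ℚ) = 0 := hsum
      have : b j + b (g j) = 0 := by exact_mod_cast this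
      omega
    exact ⟨hginv.toPerm, fun j => by simpa using hbg j⟩
end

section
/- For relatively prime positive integers p, q, and any integer k ≥ 1, define F(m,n) = (p(m+n+k)-1)! (q(m+n+k)-1)! / ((np)!(nq)!(mp)!(mq)!) for m, n ∈ ℕ. Then the two-variable power series Ψ(u,v) = Σ_{m,n ≥ 0} F(m,n) u^m v^n is not a rational function of (u,v). -/
open Finset Polynomial

namespace Oct

lemma poly_vanish {g : ℂ → ℂ} (pg : Polynomial ℂ) (hg : ∀ z, g z = pg.eval z) (M : ℕ)
    (h0 : ∀ n : ℕ, M ≤ n → g (n : ℂ) = 0) : ∀ z, g z = 0 := by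
  have hpg : pg = 0 := by
    apply eq_zero_of_infinite_isRoot
    apply Set.infinite_of_injective_forall_mem (f := fun n : ℕ => ((M + n : ℕ) : ℂ))
    · intro a b hab
      simpa using Nat.cast_injective (R := ℂ) hab
    · intro n
      simp only [Set.mem_setOf_eq, IsRoot]
      rw [← hg, h0 _ (Nat.le_add_right _ _)]
  intro z; rw [hg, hpg, eval_zero]

lemma grid_vanish (f : ℂ → ℂ → ℂ) (M : ℕ)
    (hx : ∀ y : ℂ, ∃ pp : Polynomial ℂ, ∀ x, f x y = pp.eval x)
    (hy : ∀ x : ℂ, ∃ pp : Polynomial ℂ, ∀ y, f x y = pp.eval y)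
    (h0 : ∀ m n : ℕ, M ≤ m → M ≤ n → f m n = 0) : ∀ x y, f x y = 0 := by
  have step1 : ∀ n : ℕ, M ≤ n → ∀ x : ℂ, f x n = 0 := by
    intro n hn x
    obtain ⟨pp, hpp⟩ := hx (n : ℂ)
    exact poly_vanish pp (fun z => hpp z) M (fun m hm => h0 m n hm hn) x
  intro x y
  obtain ⟨pp, hpp⟩ := hy x
  exact poly_vanish pp (fun z => hpp z) M (fun n hn => step1 n hn x) y




/-- The polynomial-valued shift quotient `T_{ij}(x,y)`. -/
noncomputable def Tf (p q k d i j : ℕ) (x y : ℂ) : ℂ :=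
  (∏ t ∈ range (p*(2*d-i-j)), ((p:ℂ)*(x+y+k)+t)) *
  (∏ t ∈ range (q*(2*d-i-j)), ((q:ℂ)*(x+y+k)+t)) *
  (∏ t ∈ range (p*i), ((p:ℂ)*(x+((d-i : ℕ):ℂ))+1+t)) *
  (∏ t ∈ range (q*i), ((q:ℂ)*(x+((d-i : ℕ):ℂ))+1+t)) *
  (∏ t ∈ range (p*j), ((p:ℂ)*(y+((d-j : ℕ):ℂ))+1+t)) *
  (∏ t ∈ range (q*j), ((q:ℂ)*(y+((d-j : ℕ):ℂ))+1+t))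

lemma fact_expand (A B : ℕ) :
    Nat.factorial (A + B) = Nat.factorial A * ∏ t ∈ range B, (A + 1 + t) := by
  induction B with
  | zero => simp
  | succ B ih =>
      rw [prod_range_succ, ← mul_assoc, ← ih, ← Nat.add_assoc, Nat.factorial_succ]
      ring

lemma fact_expandC (A B : ℕ) :
    (Nat.factorial (A + B) : ℂ) = (Nat.factorial A : ℂ) * ∏ t ∈ range B, ((A : ℂ) + 1 + t) := by
  rw [fact_expand A B]
  push_cast
  ring

lemma Tf_eq (p q k d : ℕ) (hp : 0 < p) (hq : 0 < q) (hk : 1 ≤ k) (i j m n : ℕ)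
    (hi : i ≤ d) (hj : j ≤ d) :
    Tf p q k d i j m n *
      ((Nat.factorial (p*(m+n+k)-1) : ℂ) * (Nat.factorial (q*(m+n+k)-1) : ℂ) *
       ((Nat.factorial ((n+(d-j))*p) : ℂ) * (Nat.factorial ((n+(d-j))*q) : ℂ) *
        (Nat.factorial ((m+(d-i))*p) : ℂ) * (Nat.factorial ((m+(d-i))*q) : ℂ)))
    = ((Nat.factorial (p*((m+(d-i))+(n+(d-j))+k)-1) : ℂ) *
       (Nat.factorial (q*((m+(d-i))+(n+(d-j))+k)-1) : ℂ)) *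
      ((Nat.factorial ((m+d)*p) : ℂ) * (Nat.factorial ((m+d)*q) : ℂ) *
       (Nat.factorial ((n+d)*p) : ℂ) * (Nat.factorial ((n+d)*q) : ℂ)) := by
  have hS : 1 ≤ p*(m+n+k) := Nat.mul_pos hp (by omega)
  have hSq : 1 ≤ q*(m+n+k) := Nat.mul_pos hq (by omega)
  have A1 : (Nat.factorial (p*((m+(d-i))+(n+(d-j))+k)-1) : ℂ)
      = (Nat.factorial (p*(m+n+k)-1) : ℂ) *
        ∏ t ∈ range (p*(2*d-i-j)), ((p:ℂ)*((m:ℂ)+n+k)+t) := by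
    have e1 : p*((m+(d-i))+(n+(d-j))+k)-1 = (p*(m+n+k)-1) + p*(2*d-i-j) := by
      have h : (m+(d-i))+(n+(d-j))+k = (m+n+k) + (2*d-i-j) := by omega
      rw [h, Nat.mul_add]; omega
    rw [e1, fact_expandC]
    congr 1
    refine Finset.prod_congr rfl fun t _ => ?_
    rw [Nat.cast_sub hS]
    push_cast
    ring
  have A2 : (Nat.factorial (q*((m+(d-i))+(n+(d-j))+k)-1) : ℂ)
      = (Nat.factorial (q*(m+n+k)-1) : ℂ) *
        ∏ t ∈ range (q*(2*d-i-j)), ((q:ℂ)*((m:ℂ)+n+k)+t) := by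
    have e1 : q*((m+(d-i))+(n+(d-j))+k)-1 = (q*(m+n+k)-1) + q*(2*d-i-j) := by
      have h : (m+(d-i))+(n+(d-j))+k = (m+n+k) + (2*d-i-j) := by omega
      rw [h, Nat.mul_add]; omega
    rw [e1, fact_expandC]
    congr 1
    refine Finset.prod_congr rfl fun t _ => ?_
    rw [Nat.cast_sub hSq]
    push_cast
    ring
  have B1 : (Nat.factorial ((m+d)*p) : ℂ)
      = (Nat.factorial ((m+(d-i))*p) : ℂ) *
        ∏ t ∈ range (p*i), ((p:ℂ)*((m:ℂ)+((d-i : ℕ):ℂ))+1+t) := by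
    have e : (m+d)*p = (m+(d-i))*p + p*i := by
      have h : m+d = (m+(d-i)) + i := by omega
      rw [h, Nat.add_mul]; ring
    rw [e, fact_expandC]
    congr 1
    refine Finset.prod_congr rfl fun t _ => ?_
    push_cast
    ring
  have B2 : (Nat.factorial ((m+d)*q) : ℂ)
      = (Nat.factorial ((m+(d-i))*q) : ℂ) *
        ∏ t ∈ range (q*i), ((q:ℂ)*((m:ℂ)+((d-i : ℕ):ℂ))+1+t) := by
    have e : (m+d)*q = (m+(d-i))*q + q*i := by
      have h : m+d = (m+(d-i)) + i := by omega
      rw [h, Nat.add_mul]; ring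
    rw [e, fact_expandC]
    congr 1
    refine Finset.prod_congr rfl fun t _ => ?_
    push_cast
    ring
  have B3 : (Nat.factorial ((n+d)*p) : ℂ)
      = (Nat.factorial ((n+(d-j))*p) : ℂ) *
        ∏ t ∈ range (p*j), ((p:ℂ)*((n:ℂ)+((d-j : ℕ):ℂ))+1+t) := by
    have e : (n+d)*p = (n+(d-j))*p + p*j := by
      have h : n+d = (n+(d-j)) + j := by omega
      rw [h, Nat.add_mul]; ring
    rw [e, fact_expandC]
    congr 1
    refine Finset.prod_congr rfl fun t _ => ?_
    push_cast
    ring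
  have B4 : (Nat.factorial ((n+d)*q) : ℂ)
      = (Nat.factorial ((n+(d-j))*q) : ℂ) *
        ∏ t ∈ range (q*j), ((q:ℂ)*((n:ℂ)+((d-j : ℕ):ℂ))+1+t) := by
    have e : (n+d)*q = (n+(d-j))*q + q*j := by
      have h : n+d = (n+(d-j)) + j := by omega
      rw [h, Nat.add_mul]; ring
    rw [e, fact_expandC]
    congr 1
    refine Finset.prod_congr rfl fun t _ => ?_
    push_cast
    ring
  rw [A1, A2, B1, B2, B3, B4]
  simp only [Tf]
  push_cast
  ring





/-- witness: `x ↦ Tf x y` is polynomial -/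
noncomputable def Px (p q k d i j : ℕ) (y : ℂ) : Polynomial ℂ :=
  (∏ t ∈ range (p*(2*d-i-j)), (C ((p:ℂ)*(y+k)+t) + C (p:ℂ) * X)) *
  (∏ t ∈ range (q*(2*d-i-j)), (C ((q:ℂ)*(y+k)+t) + C (q:ℂ) * X)) *
  (∏ t ∈ range (p*i), (C ((p:ℂ)*((d-i : ℕ):ℂ)+1+t) + C (p:ℂ) * X)) *
  (∏ t ∈ range (q*i), (C ((q:ℂ)*((d-i : ℕ):ℂ)+1+t) + C (q:ℂ) * X)) *
  C ((∏ t ∈ range (p*j), ((p:ℂ)*(y+((d-j : ℕ):ℂ))+1+t)) *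
     (∏ t ∈ range (q*j), ((q:ℂ)*(y+((d-j : ℕ):ℂ))+1+t)))

lemma Px_eval (p q k d i j : ℕ) (y x : ℂ) :
    (Px p q k d i j y).eval x = Tf p q k d i j x y := by
  simp only [Px, Tf, eval_mul, eval_prod, eval_add, eval_C, eval_X]
  rw [show (∏ t ∈ range (p*(2*d-i-j)), ((p:ℂ)*(y+k)+t + p*x))
      = ∏ t ∈ range (p*(2*d-i-j)), ((p:ℂ)*(x+y+k)+t) from
    Finset.prod_congr rfl fun t _ => by ring]
  rw [show (∏ t ∈ range (q*(2*d-i-j)), ((q:ℂ)*(y+k)+t + q*x))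
      = ∏ t ∈ range (q*(2*d-i-j)), ((q:ℂ)*(x+y+k)+t) from
    Finset.prod_congr rfl fun t _ => by ring]
  rw [show (∏ t ∈ range (p*i), ((p:ℂ)*((d-i : ℕ):ℂ)+1+t + p*x))
      = ∏ t ∈ range (p*i), ((p:ℂ)*(x+((d-i : ℕ):ℂ))+1+t) from
    Finset.prod_congr rfl fun t _ => by ring]
  rw [show (∏ t ∈ range (q*i), ((q:ℂ)*((d-i : ℕ):ℂ)+1+t + q*x))
      = ∏ t ∈ range (q*i), ((q:ℂ)*(x+((d-i : ℕ):ℂ))+1+t) from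
    Finset.prod_congr rfl fun t _ => by ring]
  ring

/-- witness: `y ↦ Tf x y` is polynomial -/
noncomputable def Py (p q k d i j : ℕ) (x : ℂ) : Polynomial ℂ :=
  (∏ t ∈ range (p*(2*d-i-j)), (C ((p:ℂ)*(x+k)+t) + C (p:ℂ) * X)) *
  (∏ t ∈ range (q*(2*d-i-j)), (C ((q:ℂ)*(x+k)+t) + C (q:ℂ) * X)) *
  C ((∏ t ∈ range (p*i), ((p:ℂ)*(x+((d-i : ℕ):ℂ))+1+t)) *
     (∏ t ∈ range (q*i), ((q:ℂ)*(x+((d-i : ℕ):ℂ))+1+t))) *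
  (∏ t ∈ range (p*j), (C ((p:ℂ)*((d-j : ℕ):ℂ)+1+t) + C (p:ℂ) * X)) *
  (∏ t ∈ range (q*j), (C ((q:ℂ)*((d-j : ℕ):ℂ)+1+t) + C (q:ℂ) * X))

lemma Py_eval (p q k d i j : ℕ) (x y : ℂ) :
    (Py p q k d i j x).eval y = Tf p q k d i j x y := by
  simp only [Py, Tf, eval_mul, eval_prod, eval_add, eval_C, eval_X]
  rw [show (∏ t ∈ range (p*(2*d-i-j)), ((p:ℂ)*(x+k)+t + p*y))
      = ∏ t ∈ range (p*(2*d-i-j)), ((p:ℂ)*(x+y+k)+t) from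
    Finset.prod_congr rfl fun t _ => by ring]
  rw [show (∏ t ∈ range (q*(2*d-i-j)), ((q:ℂ)*(x+k)+t + q*y))
      = ∏ t ∈ range (q*(2*d-i-j)), ((q:ℂ)*(x+y+k)+t) from
    Finset.prod_congr rfl fun t _ => by ring]
  rw [show (∏ t ∈ range (p*j), ((p:ℂ)*((d-j : ℕ):ℂ)+1+t + p*y))
      = ∏ t ∈ range (p*j), ((p:ℂ)*(y+((d-j : ℕ):ℂ))+1+t) from
    Finset.prod_congr rfl fun t _ => by ring]
  rw [show (∏ t ∈ range (q*j), ((q:ℂ)*((d-j : ℕ):ℂ)+1+t + q*y))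
      = ∏ t ∈ range (q*j), ((q:ℂ)*(y+((d-j : ℕ):ℂ))+1+t) from
    Finset.prod_congr rfl fun t _ => by ring]
  ring

/-- the curve polynomial: `Tf` along `x = -d+ε`, `y = -d+λε`. -/
noncomputable def Pc (p q k d i j : ℕ) (l : ℂ) : Polynomial ℂ :=
  (∏ t ∈ range (p*(2*d-i-j)), (C ((p:ℂ)*((k:ℂ)-2*d)+t) + C ((p:ℂ)*(1+l)) * X)) *
  (∏ t ∈ range (q*(2*d-i-j)), (C ((q:ℂ)*((k:ℂ)-2*d)+t) + C ((q:ℂ)*(1+l)) * X)) *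
  (∏ t ∈ range (p*i), (C (1+(t:ℂ)-(p:ℂ)*i) + C (p:ℂ) * X)) *
  (∏ t ∈ range (q*i), (C (1+(t:ℂ)-(q:ℂ)*i) + C (q:ℂ) * X)) *
  (∏ t ∈ range (p*j), (C (1+(t:ℂ)-(p:ℂ)*j) + C ((p:ℂ)*l) * X)) *
  (∏ t ∈ range (q*j), (C (1+(t:ℂ)-(q:ℂ)*j) + C ((q:ℂ)*l) * X))

lemma Pc_eval (p q k d i j : ℕ) (hi : i ≤ d) (hj : j ≤ d) (l e : ℂ) :
    (Pc p q k d i j l).eval e = Tf p q k d i j (-(d:ℂ)+e) (-(d:ℂ)+l*e) := by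
  have hdi : ((d-i : ℕ) : ℂ) = (d:ℂ) - i := by rw [Nat.cast_sub hi]
  have hdj : ((d-j : ℕ) : ℂ) = (d:ℂ) - j := by rw [Nat.cast_sub hj]
  simp only [Pc, Tf, eval_mul, eval_prod, eval_add, eval_C, eval_X, hdi, hdj]
  rw [show (∏ t ∈ range (p*(2*d-i-j)), ((p:ℂ)*((k:ℂ)-2*d)+t + (p:ℂ)*(1+l)*e))
      = ∏ t ∈ range (p*(2*d-i-j)), ((p:ℂ)*((-(d:ℂ)+e)+(-(d:ℂ)+l*e)+k)+t) from
    Finset.prod_congr rfl fun t _ => by ring]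
  rw [show (∏ t ∈ range (q*(2*d-i-j)), ((q:ℂ)*((k:ℂ)-2*d)+t + (q:ℂ)*(1+l)*e))
      = ∏ t ∈ range (q*(2*d-i-j)), ((q:ℂ)*((-(d:ℂ)+e)+(-(d:ℂ)+l*e)+k)+t) from
    Finset.prod_congr rfl fun t _ => by ring]
  rw [show (∏ t ∈ range (p*i), (1+(t:ℂ)-(p:ℂ)*i + (p:ℂ)*e))
      = ∏ t ∈ range (p*i), ((p:ℂ)*((-(d:ℂ)+e)+((d:ℂ)-i))+1+t) from
    Finset.prod_congr rfl fun t _ => by ring]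
  rw [show (∏ t ∈ range (q*i), (1+(t:ℂ)-(q:ℂ)*i + (q:ℂ)*e))
      = ∏ t ∈ range (q*i), ((q:ℂ)*((-(d:ℂ)+e)+((d:ℂ)-i))+1+t) from
    Finset.prod_congr rfl fun t _ => by ring]
  rw [show (∏ t ∈ range (p*j), (1+(t:ℂ)-(p:ℂ)*j + (p:ℂ)*l*e))
      = ∏ t ∈ range (p*j), ((p:ℂ)*((-(d:ℂ)+l*e)+((d:ℂ)-j))+1+t) from
    Finset.prod_congr rfl fun t _ => by ring]
  rw [show (∏ t ∈ range (q*j), (1+(t:ℂ)-(q:ℂ)*j + (q:ℂ)*l*e))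
      = ∏ t ∈ range (q*j), ((q:ℂ)*((-(d:ℂ)+l*e)+((d:ℂ)-j))+1+t) from
    Finset.prod_congr rfl fun t _ => by ring]





noncomputable def LP (s : Finset ℕ) (a b e : ℂ) : ℂ := ∏ t ∈ s, (a + t + b*e)

noncomputable def LPpoly (s : Finset ℕ) (a b : ℂ) : Polynomial ℂ :=
  ∏ t ∈ s, (C (a + t) + C b * X)

lemma LPpoly_eval (s : Finset ℕ) (a b e : ℂ) : (LPpoly s a b).eval e = LP s a b e := by
  rw [LPpoly, LP, eval_prod]
  exact Finset.prod_congr rfl fun t _ => by simp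

lemma LP_peel {s : Finset ℕ} {t₀ : ℕ} (h : t₀ ∈ s) (a b e : ℂ) :
    LP s a b e = (a + t₀ + b*e) * LP (s.erase t₀) a b e := by
  rw [LP, LP]
  exact (Finset.mul_prod_erase s (fun t => (a + (t:ℂ) + b*e)) h).symm

lemma LP_zero (s : Finset ℕ) (a b : ℂ) : LP s a b 0 = ∏ t ∈ s, (a + t) := by
  rw [LP]; exact Finset.prod_congr rfl fun t _ => by ring

noncomputable def Qv (p q k d i j : ℕ) (l e : ℂ) : ℂ :=
  (if 1 ≤ i then (p:ℂ)*(q:ℂ)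
   else if 1 ≤ j then ((p:ℂ)*l)*((q:ℂ)*l)
   else ((p:ℂ)*(1+l))*((q:ℂ)*(1+l))) *
  (LP (if i = 0 ∧ j = 0 then (range (p*(2*d-i-j))).erase (p*(2*d-k))
       else range (p*(2*d-i-j))) ((p:ℂ)*((k:ℂ)-2*(d:ℂ))) ((p:ℂ)*(1+l)) e *
   LP (if i = 0 ∧ j = 0 then (range (q*(2*d-i-j))).erase (q*(2*d-k))
       else range (q*(2*d-i-j))) ((q:ℂ)*((k:ℂ)-2*(d:ℂ))) ((q:ℂ)*(1+l)) e *
   LP (if 1 ≤ i then (range (p*i)).erase (p*i-1) else range (p*i))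
      ((p:ℂ)*(((d-i : ℕ):ℂ)-(d:ℂ))+1) (p:ℂ) e *
   LP (if 1 ≤ i then (range (q*i)).erase (q*i-1) else range (q*i))
      ((q:ℂ)*(((d-i : ℕ):ℂ)-(d:ℂ))+1) (q:ℂ) e *
   LP (if i = 0 ∧ 1 ≤ j then (range (p*j)).erase (p*j-1) else range (p*j))
      ((p:ℂ)*(((d-j : ℕ):ℂ)-(d:ℂ))+1) ((p:ℂ)*l) e *
   LP (if i = 0 ∧ 1 ≤ j then (range (q*j)).erase (q*j-1) else range (q*j))
      ((q:ℂ)*(((d-j : ℕ):ℂ)-(d:ℂ))+1) ((q:ℂ)*l) e)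

lemma curve_eq (p q k d i j : ℕ) (hp : 0 < p) (hq : 0 < q) (hk : 1 ≤ k) (hkd : k ≤ d)
    (hi : i ≤ d) (hj : j ≤ d) (l e : ℂ) :
    Tf p q k d i j (-(d:ℂ)+e) (-(d:ℂ)+l*e) = e^2 * Qv p q k d i j l e := by
  have hdi : ((d-i : ℕ) : ℂ) = (d:ℂ) - i := by rw [Nat.cast_sub hi]
  have hdj : ((d-j : ℕ) : ℂ) = (d:ℂ) - j := by rw [Nat.cast_sub hj]
  rw [Tf]
  rw [show ∏ t ∈ range (p*(2*d-i-j)), ((p:ℂ)*((-(d:ℂ)+e)+(-(d:ℂ)+l*e)+(k:ℂ))+(t:ℂ))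
      = LP (range (p*(2*d-i-j))) ((p:ℂ)*((k:ℂ)-2*(d:ℂ))) ((p:ℂ)*(1+l)) e from by
    rw [LP]; exact Finset.prod_congr rfl fun t _ => by ring]
  rw [show ∏ t ∈ range (q*(2*d-i-j)), ((q:ℂ)*((-(d:ℂ)+e)+(-(d:ℂ)+l*e)+(k:ℂ))+(t:ℂ))
      = LP (range (q*(2*d-i-j))) ((q:ℂ)*((k:ℂ)-2*(d:ℂ))) ((q:ℂ)*(1+l)) e from by
    rw [LP]; exact Finset.prod_congr rfl fun t _ => by ring]
  rw [show ∏ t ∈ range (p*i), ((p:ℂ)*((-(d:ℂ)+e)+((d-i : ℕ):ℂ))+1+(t:ℂ))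
      = LP (range (p*i)) ((p:ℂ)*(((d-i : ℕ):ℂ)-(d:ℂ))+1) (p:ℂ) e from by
    rw [LP]; exact Finset.prod_congr rfl fun t _ => by ring]
  rw [show ∏ t ∈ range (q*i), ((q:ℂ)*((-(d:ℂ)+e)+((d-i : ℕ):ℂ))+1+(t:ℂ))
      = LP (range (q*i)) ((q:ℂ)*(((d-i : ℕ):ℂ)-(d:ℂ))+1) (q:ℂ) e from by
    rw [LP]; exact Finset.prod_congr rfl fun t _ => by ring]
  rw [show ∏ t ∈ range (p*j), ((p:ℂ)*((-(d:ℂ)+l*e)+((d-j : ℕ):ℂ))+1+(t:ℂ))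
      = LP (range (p*j)) ((p:ℂ)*(((d-j : ℕ):ℂ)-(d:ℂ))+1) ((p:ℂ)*l) e from by
    rw [LP]; exact Finset.prod_congr rfl fun t _ => by ring]
  rw [show ∏ t ∈ range (q*j), ((q:ℂ)*((-(d:ℂ)+l*e)+((d-j : ℕ):ℂ))+1+(t:ℂ))
      = LP (range (q*j)) ((q:ℂ)*(((d-j : ℕ):ℂ)-(d:ℂ))+1) ((q:ℂ)*l) e from by
    rw [LP]; exact Finset.prod_congr rfl fun t _ => by ring]
  rcases Nat.lt_or_ge 0 i with hi1 | hi1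
  · have h1 : 1 ≤ p*i := Nat.mul_pos hp hi1
    have h2 : 1 ≤ q*i := Nat.mul_pos hq hi1
    have m1 : p*i-1 ∈ range (p*i) := by rw [mem_range]; omega
    have m2 : q*i-1 ∈ range (q*i) := by rw [mem_range]; omega
    rw [LP_peel m1, LP_peel m2]
    have f1 : ((p:ℂ)*(((d-i : ℕ):ℂ)-(d:ℂ))+1 + ((p*i-1 : ℕ):ℂ) + (p:ℂ)*e) = (p:ℂ)*e := by
      rw [Nat.cast_sub h1, hdi]; push_cast; ring
    have f2 : ((q:ℂ)*(((d-i : ℕ):ℂ)-(d:ℂ))+1 + ((q*i-1 : ℕ):ℂ) + (q:ℂ)*e) = (q:ℂ)*e := by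
      rw [Nat.cast_sub h2, hdi]; push_cast; ring
    rw [f1, f2]
    simp only [Qv, eq_true (show 1 ≤ i from hi1),
      eq_false (show ¬(i = 0 ∧ j = 0) from by omega),
      eq_false (show ¬(i = 0 ∧ 1 ≤ j) from by omega), if_true, if_false]
    ring
  · interval_cases i
    rcases Nat.lt_or_ge 0 j with hj1 | hj1
    · have h1 : 1 ≤ p*j := Nat.mul_pos hp hj1
      have h2 : 1 ≤ q*j := Nat.mul_pos hq hj1
      have m1 : p*j-1 ∈ range (p*j) := by rw [mem_range]; omega
      have m2 : q*j-1 ∈ range (q*j) := by rw [mem_range]; omega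
      rw [LP_peel m1, LP_peel m2]
      have f1 : ((p:ℂ)*(((d-j : ℕ):ℂ)-(d:ℂ))+1 + ((p*j-1 : ℕ):ℂ) + (p:ℂ)*l*e) = (p:ℂ)*l*e := by
        rw [Nat.cast_sub h1, hdj]; push_cast; ring
      have f2 : ((q:ℂ)*(((d-j : ℕ):ℂ)-(d:ℂ))+1 + ((q*j-1 : ℕ):ℂ) + (q:ℂ)*l*e) = (q:ℂ)*l*e := by
        rw [Nat.cast_sub h2, hdj]; push_cast; ring
      rw [f1, f2]
      simp only [Qv, eq_false (show ¬(1 ≤ 0) from by omega),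
        eq_false (show ¬(j = 0) from by omega),
        eq_true (show 1 ≤ j from hj1), true_and, and_true, and_false, false_and,
        if_true, if_false]
      ring
    · interval_cases j
      have h2d : k ≤ 2*d := by omega
      have m1 : p*(2*d-k) ∈ range (p*(2*d-0-0)) := by
        rw [mem_range]; exact mul_lt_mul_of_pos_left (by omega) hp
      have m2 : q*(2*d-k) ∈ range (q*(2*d-0-0)) := by
        rw [mem_range]; exact mul_lt_mul_of_pos_left (by omega) hq
      rw [LP_peel m1, LP_peel m2]
      have f1 : ((p:ℂ)*((k:ℂ)-2*(d:ℂ)) + ((p*(2*d-k) : ℕ):ℂ) + (p:ℂ)*(1+l)*e)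
          = (p:ℂ)*(1+l)*e := by
        rw [Nat.cast_mul, Nat.cast_sub h2d]; push_cast; ring
      have f2 : ((q:ℂ)*((k:ℂ)-2*(d:ℂ)) + ((q*(2*d-k) : ℕ):ℂ) + (q:ℂ)*(1+l)*e)
          = (q:ℂ)*(1+l)*e := by
        rw [Nat.cast_mul, Nat.cast_sub h2d]; push_cast; ring
      rw [f1, f2]
      simp only [Qv, eq_false (show ¬(1 ≤ 0) from by omega),
        true_and, and_true, and_false, false_and, and_self, if_true, if_false]
      ring

/-- the nonvanishing constant -/
noncomputable def Rv (p q k d : ℕ) : ℂ :=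
  (∏ t ∈ (range (p*(2*d))).erase (p*(2*d-k)), ((p:ℂ)*((k:ℂ)-2*(d:ℂ))+t)) *
  (∏ t ∈ (range (q*(2*d))).erase (q*(2*d-k)), ((q:ℂ)*((k:ℂ)-2*(d:ℂ))+t))

lemma Rv_ne (p q k d : ℕ) (hkd : k ≤ 2*d) : Rv p q k d ≠ 0 := by
  have key : ∀ r : ℕ, ∀ t ∈ (range (r*(2*d))).erase (r*(2*d-k)),
      ((r:ℂ)*((k:ℂ)-2*(d:ℂ))+t) ≠ 0 := by
    intro r t ht h0
    have h1 : (t : ℂ) = ((r*(2*d-k) : ℕ) : ℂ) := by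
      rw [Nat.cast_mul, Nat.cast_sub hkd]
      push_cast
      linear_combination h0
    exact (Finset.mem_erase.mp ht).1 (Nat.cast_inj.mp h1)
  exact mul_ne_zero (Finset.prod_ne_zero_iff.mpr (key p))
    (Finset.prod_ne_zero_iff.mpr (key q))

lemma Qv_zero_ne (p q k d i j : ℕ) (hij : ¬(i = 0 ∧ j = 0)) :
    Qv p q k d i j 1 0 = Qv p q k d i j (-1) 0 := by
  simp only [Qv, LP_zero]
  rcases Nat.lt_or_ge 0 i with hi1 | hi1
  · simp only [eq_true (show 1 ≤ i from hi1), if_true]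
  · interval_cases i
    have hj1 : 1 ≤ j := by omega
    simp only [eq_false (show ¬(1 ≤ 0) from by omega),
      eq_true hj1, if_true, if_false]
    try ring

lemma Qv00_zero (p q k d : ℕ) (l : ℂ) :
    Qv p q k d 0 0 l 0 = ((p:ℂ)*(1+l))*((q:ℂ)*(1+l)) * Rv p q k d := by
  simp only [Qv, LP_zero, Rv, eq_false (show ¬(1 ≤ 0) from by omega),
    true_and, and_self, if_true, if_false, Nat.mul_zero, range_zero,
    Nat.sub_zero, erase_empty, prod_empty, mul_one]
  try ring



noncomputable def QvPoly (p q k d i j : ℕ) (l : ℂ) : Polynomial ℂ :=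
  C (if 1 ≤ i then (p:ℂ)*(q:ℂ)
     else if 1 ≤ j then ((p:ℂ)*l)*((q:ℂ)*l)
     else ((p:ℂ)*(1+l))*((q:ℂ)*(1+l))) *
  (LPpoly (if i = 0 ∧ j = 0 then (range (p*(2*d-i-j))).erase (p*(2*d-k))
           else range (p*(2*d-i-j))) ((p:ℂ)*((k:ℂ)-2*(d:ℂ))) ((p:ℂ)*(1+l)) *
   LPpoly (if i = 0 ∧ j = 0 then (range (q*(2*d-i-j))).erase (q*(2*d-k))
           else range (q*(2*d-i-j))) ((q:ℂ)*((k:ℂ)-2*(d:ℂ))) ((q:ℂ)*(1+l)) *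
   LPpoly (if 1 ≤ i then (range (p*i)).erase (p*i-1) else range (p*i))
      ((p:ℂ)*(((d-i : ℕ):ℂ)-(d:ℂ))+1) (p:ℂ) *
   LPpoly (if 1 ≤ i then (range (q*i)).erase (q*i-1) else range (q*i))
      ((q:ℂ)*(((d-i : ℕ):ℂ)-(d:ℂ))+1) (q:ℂ) *
   LPpoly (if i = 0 ∧ 1 ≤ j then (range (p*j)).erase (p*j-1) else range (p*j))
      ((p:ℂ)*(((d-j : ℕ):ℂ)-(d:ℂ))+1) ((p:ℂ)*l) *
   LPpoly (if i = 0 ∧ 1 ≤ j then (range (q*j)).erase (q*j-1) else range (q*j))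
      ((q:ℂ)*(((d-j : ℕ):ℂ)-(d:ℂ))+1) ((q:ℂ)*l))

lemma QvPoly_eval (p q k d i j : ℕ) (l e : ℂ) :
    (QvPoly p q k d i j l).eval e = Qv p q k d i j l e := by
  simp only [QvPoly, Qv, eval_mul, eval_C, LPpoly_eval]




noncomputable def fs (i j : ℕ) : Fin 2 →₀ ℕ := Finsupp.single 0 i + Finsupp.single 1 j

@[simp] lemma fs_apply0 (i j : ℕ) : fs i j 0 = i := by
  simp [fs, Finsupp.single_apply]

@[simp] lemma fs_apply1 (i j : ℕ) : fs i j 1 = j := by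
  simp [fs, Finsupp.single_apply]

lemma fs_eta (v : Fin 2 →₀ ℕ) : fs (v 0) (v 1) = v := by
  ext a
  fin_cases a
  · simp
  · simp

lemma fs_zero : fs 0 0 = 0 := by
  simp [fs]

lemma sum_support_eq (v : Fin 2 →₀ ℕ) : ∑ a ∈ v.support, v a = v 0 + v 1 := by
  rw [Finset.sum_subset (Finset.subset_univ _)
    (by intro x _ hx; simpa using Finsupp.notMem_support_iff.mp hx)]
  exact Fin.sum_univ_two v

lemma antidiag_sum (E0 E1 : ℕ) (g : (Fin 2 →₀ ℕ) → (Fin 2 →₀ ℕ) → ℂ) :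
    ∑ x ∈ Finset.HasAntidiagonal.antidiagonal (fs E0 E1), g x.1 x.2
      = ∑ ij ∈ range (E0+1) ×ˢ range (E1+1),
          g (fs ij.1 ij.2) (fs (E0-ij.1) (E1-ij.2)) := by
  apply Finset.sum_nbij' (i := fun x => (x.1 0, x.1 1))
    (j := fun ij => (fs ij.1 ij.2, fs (E0-ij.1) (E1-ij.2)))
  · intro x hx
    rw [Finset.HasAntidiagonal.mem_antidiagonal] at hx
    have h0 : x.1 0 + x.2 0 = E0 := by
      have := DFunLike.congr_fun hx (0 : Fin 2)
      simpa [Finsupp.add_apply] using this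
    have h1 : x.1 1 + x.2 1 = E1 := by
      have := DFunLike.congr_fun hx (1 : Fin 2)
      simpa [Finsupp.add_apply] using this
    rw [Finset.mem_product, Finset.mem_range, Finset.mem_range]
    omega
  · intro ij hij
    rw [Finset.mem_product, Finset.mem_range, Finset.mem_range] at hij
    rw [Finset.HasAntidiagonal.mem_antidiagonal]
    ext a
    fin_cases a
    · simp; omega
    · simp; omega
  · intro x hx
    rw [Finset.HasAntidiagonal.mem_antidiagonal] at hx
    have h0 : x.1 0 + x.2 0 = E0 := by
      have := DFunLike.congr_fun hx (0 : Fin 2)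
      simpa [Finsupp.add_apply] using this
    have h1 : x.1 1 + x.2 1 = E1 := by
      have := DFunLike.congr_fun hx (1 : Fin 2)
      simpa [Finsupp.add_apply] using this
    have e1 : fs (x.1 0) (x.1 1) = x.1 := fs_eta x.1
    have e2 : fs (E0 - x.1 0) (E1 - x.1 1) = x.2 := by
      rw [← fs_eta x.2]
      congr 1 <;> omega
    rw [Prod.ext_iff]
    exact ⟨e1, e2⟩
  · intro ij hij
    simp
  · intro x hx
    rw [Finset.HasAntidiagonal.mem_antidiagonal] at hx
    have h0 : x.1 0 + x.2 0 = E0 := by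
      have := DFunLike.congr_fun hx (0 : Fin 2)
      simpa [Finsupp.add_apply] using this
    have h1 : x.1 1 + x.2 1 = E1 := by
      have := DFunLike.congr_fun hx (1 : Fin 2)
      simpa [Finsupp.add_apply] using this
    have e1 : fs (x.1 0) (x.1 1) = x.1 := fs_eta x.1
    have e2 : fs (E0 - x.1 0) (E1 - x.1 1) = x.2 := by
      rw [← fs_eta x.2]
      congr 1 <;> omega
    rw [e1, e2]


end Oct

set_option maxHeartbeats 1600000 in
/-- For coprime positive integers `p, q` and an integer `k ≥ 1`, the two-variable power
series `Ψ(u,v) = Σ_{m,n≥0} F(m,n) uᵐ vⁿ`, where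
`F(m,n) = (p(m+n+k)-1)! (q(m+n+k)-1)! / ((np)!(nq)!(mp)!(mq)!)`,
is not a rational function of `(u,v)`. -/
theorem octahedron_series_not_rational (p q k : ℕ) (hp : 0 < p) (hq : 0 < q)
    (hpq : Nat.Coprime p q) (hk : 1 ≤ k)
    (F : ℕ → ℕ → ℂ)
    (hF : F = fun m n =>
      ((Nat.factorial (p * (m + n + k) - 1) : ℂ) * (Nat.factorial (q * (m + n + k) - 1) : ℂ)) /
      ((Nat.factorial (n * p) : ℂ) * (Nat.factorial (n * q) : ℂ) *
        (Nat.factorial (m * p) : ℂ) * (Nat.factorial (m * q) : ℂ)))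
    (Ψ : MvPowerSeries (Fin 2) ℂ)
    (hΨ : ∀ e : Fin 2 →₀ ℕ, MvPowerSeries.coeff e Ψ = F (e 0) (e 1)) :
    ¬ ∃ P Q : MvPolynomial (Fin 2) ℂ, MvPolynomial.coeff 0 Q ≠ 0 ∧
      (Q : MvPowerSeries (Fin 2) ℂ) * Ψ = (P : MvPowerSeries (Fin 2) ℂ) := by
  classical
  rintro ⟨P, Q, hQ0, hPQ⟩
  open Finset Polynomial in
  set d := Q.totalDegree + k with hd
  have hkd : k ≤ d := by omega
  set M := P.totalDegree + 1 with hM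
  set S : Finset (ℕ × ℕ) := range (d+1) ×ˢ range (d+1) with hS
  set c : ℕ → ℕ → ℂ := fun i j => MvPolynomial.coeff (Oct.fs i j) Q with hc
  -- Step 1: the recurrence from rationality
  have hrec : ∀ m n : ℕ, M ≤ m → M ≤ n →
      ∑ ij ∈ S, c ij.1 ij.2 * F (m+(d-ij.1)) (n+(d-ij.2)) = 0 := by
    intro m n hm hn
    have hcoeffP : MvPolynomial.coeff (Oct.fs (m+d) (n+d)) P = 0 := by
      apply MvPolynomial.coeff_eq_zero_of_totalDegree_lt
      rw [Oct.sum_support_eq]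
      simp only [Oct.fs_apply0, Oct.fs_apply1]
      omega
    have h1 : MvPowerSeries.coeff (Oct.fs (m+d) (n+d))
        ((Q : MvPowerSeries (Fin 2) ℂ) * Ψ) = 0 := by
      rw [hPQ, MvPolynomial.coeff_coe, hcoeffP]
    rw [MvPowerSeries.coeff_mul] at h1
    have h2 : ∑ x ∈ Finset.HasAntidiagonal.antidiagonal (Oct.fs (m+d) (n+d)),
        (MvPolynomial.coeff x.1 Q) * F (x.2 0) (x.2 1) = 0 := by
      rw [← h1]
      refine Finset.sum_congr rfl fun x hx => ?_
      rw [MvPolynomial.coeff_coe, hΨ]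
    rw [Oct.antidiag_sum (m+d) (n+d)
      (fun u v => MvPolynomial.coeff u Q * F (v 0) (v 1))] at h2
    simp only [Oct.fs_apply0, Oct.fs_apply1] at h2
    rw [← h2]
    have hsub : S ⊆ range (m+d+1) ×ˢ range (n+d+1) :=
      Finset.product_subset_product (Finset.range_subset_range.mpr (by omega))
        (Finset.range_subset_range.mpr (by omega))
    rw [← Finset.sum_subset hsub ?_]
    · refine Finset.sum_congr rfl fun ij hij => ?_
      rw [hS, Finset.mem_product, Finset.mem_range, Finset.mem_range] at hij
      rw [show m+d-ij.1 = m+(d-ij.1) from by omega,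
        show n+d-ij.2 = n+(d-ij.2) from by omega]
    · intro x hx hxs
      rw [Finset.mem_product, Finset.mem_range, Finset.mem_range] at hx
      rw [hS, Finset.mem_product, Finset.mem_range, Finset.mem_range] at hxs
      have hcz : MvPolynomial.coeff (Oct.fs x.1 x.2) Q = 0 := by
        apply MvPolynomial.coeff_eq_zero_of_totalDegree_lt
        rw [Oct.sum_support_eq]
        simp only [Oct.fs_apply0, Oct.fs_apply1]
        omega
      rw [hcz, zero_mul]
  -- Step 2: the recurrence for the polynomial quotients Tf
  have hTf0 : ∀ m n : ℕ, M ≤ m → M ≤ n →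
      ∑ ij ∈ S, c ij.1 ij.2 * Oct.Tf p q k d ij.1 ij.2 (m : ℂ) (n : ℂ) = 0 := by
    intro m n hm hn
    have hA : ((Nat.factorial (p*(m+n+k)-1) : ℂ) * (Nat.factorial (q*(m+n+k)-1) : ℂ)) ≠ 0 :=
      mul_ne_zero (Nat.cast_ne_zero.mpr (Nat.factorial_ne_zero _))
        (Nat.cast_ne_zero.mpr (Nat.factorial_ne_zero _))
    have key : ∀ ij ∈ S, c ij.1 ij.2 * Oct.Tf p q k d ij.1 ij.2 (m : ℂ) (n : ℂ) *
        ((Nat.factorial (p*(m+n+k)-1) : ℂ) * (Nat.factorial (q*(m+n+k)-1) : ℂ))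
        = c ij.1 ij.2 * F (m+(d-ij.1)) (n+(d-ij.2)) *
          ((Nat.factorial ((m+d)*p) : ℂ) * (Nat.factorial ((m+d)*q) : ℂ) *
           (Nat.factorial ((n+d)*p) : ℂ) * (Nat.factorial ((n+d)*q) : ℂ)) := by
      intro ij hij
      rw [hS, Finset.mem_product, Finset.mem_range, Finset.mem_range] at hij
      have hTe := Oct.Tf_eq p q k d hp hq hk ij.1 ij.2 m n (by omega) (by omega)
      have hD : ((Nat.factorial ((n+(d-ij.2))*p) : ℂ) * (Nat.factorial ((n+(d-ij.2))*q) : ℂ) *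
          (Nat.factorial ((m+(d-ij.1))*p) : ℂ) * (Nat.factorial ((m+(d-ij.1))*q) : ℂ)) ≠ 0 := by
        refine mul_ne_zero (mul_ne_zero (mul_ne_zero ?_ ?_) ?_) ?_ <;>
          exact Nat.cast_ne_zero.mpr (Nat.factorial_ne_zero _)
      rw [hF]
      simp only
      rw [mul_assoc (c ij.1 ij.2) (_ / _), div_mul_eq_mul_div, ← hTe, mul_div_assoc,
        mul_div_cancel_right₀ _ hD]
      ring
    have h3 : (∑ ij ∈ S, c ij.1 ij.2 * Oct.Tf p q k d ij.1 ij.2 (m : ℂ) (n : ℂ)) *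
        ((Nat.factorial (p*(m+n+k)-1) : ℂ) * (Nat.factorial (q*(m+n+k)-1) : ℂ)) = 0 := by
      rw [Finset.sum_mul]
      rw [Finset.sum_congr rfl key]
      rw [← Finset.sum_mul, hrec m n hm hn, zero_mul]
    exact (mul_eq_zero.mp h3).resolve_right hA
  -- Step 3: promote to all complex points
  have hf0 : ∀ x y : ℂ, ∑ ij ∈ S, c ij.1 ij.2 * Oct.Tf p q k d ij.1 ij.2 x y = 0 := by
    have := Oct.grid_vanish
      (fun x y => ∑ ij ∈ S, c ij.1 ij.2 * Oct.Tf p q k d ij.1 ij.2 x y) M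
      (fun y => ⟨∑ ij ∈ S, Polynomial.C (c ij.1 ij.2) * Oct.Px p q k d ij.1 ij.2 y,
        fun x => by
          rw [Polynomial.eval_finset_sum]
          exact (Finset.sum_congr rfl fun ij _ => by
            rw [Polynomial.eval_mul, Polynomial.eval_C, Oct.Px_eval]).symm⟩)
      (fun x => ⟨∑ ij ∈ S, Polynomial.C (c ij.1 ij.2) * Oct.Py p q k d ij.1 ij.2 x,
        fun y => by
          rw [Polynomial.eval_finset_sum]
          exact (Finset.sum_congr rfl fun ij _ => by
            rw [Polynomial.eval_mul, Polynomial.eval_C, Oct.Py_eval]).symm⟩)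
      (fun m n hm hn => hTf0 m n hm hn)
    exact this
  -- Step 4: along the curve, divide by e² and let e → 0
  have hQv0 : ∀ l : ℂ, ∑ ij ∈ S, c ij.1 ij.2 * Oct.Qv p q k d ij.1 ij.2 l 0 = 0 := by
    intro l
    have hne : ∀ e : ℂ, e ≠ 0 →
        ∑ ij ∈ S, c ij.1 ij.2 * Oct.Qv p q k d ij.1 ij.2 l e = 0 := by
      intro e he
      have h := hf0 (-(d:ℂ)+e) (-(d:ℂ)+l*e)
      have h2 : ∑ ij ∈ S, c ij.1 ij.2 * (e^2 * Oct.Qv p q k d ij.1 ij.2 l e) = 0 := by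
        rw [← h]
        refine Finset.sum_congr rfl fun ij hij => ?_
        rw [hS, Finset.mem_product, Finset.mem_range, Finset.mem_range] at hij
        rw [Oct.curve_eq p q k d ij.1 ij.2 hp hq hk hkd (by omega) (by omega)]
      have h3 : e^2 * ∑ ij ∈ S, c ij.1 ij.2 * Oct.Qv p q k d ij.1 ij.2 l e = 0 := by
        rw [Finset.mul_sum, ← h2]
        exact Finset.sum_congr rfl fun ij _ => by ring
      exact (mul_eq_zero.mp h3).resolve_left (pow_ne_zero 2 he)
    have := Oct.poly_vanish
      (g := fun e => ∑ ij ∈ S, c ij.1 ij.2 * Oct.Qv p q k d ij.1 ij.2 l e)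
      (∑ ij ∈ S, Polynomial.C (c ij.1 ij.2) * Oct.QvPoly p q k d ij.1 ij.2 l)
      (fun e => by
        rw [Polynomial.eval_finset_sum]
        exact (Finset.sum_congr rfl fun ij _ => by
          rw [Polynomial.eval_mul, Polynomial.eval_C, Oct.QvPoly_eval]).symm)
      1
      (fun n hn => hne n (Nat.cast_ne_zero.mpr (by omega)))
    exact this 0
  -- Step 5: collapse the sum at l = 1 vs l = -1
  have hdiff : ∑ ij ∈ S, c ij.1 ij.2 *
      (Oct.Qv p q k d ij.1 ij.2 1 0 - Oct.Qv p q k d ij.1 ij.2 (-1) 0) = 0 := by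
    have e1 := hQv0 1
    have e2 := hQv0 (-1)
    have : ∑ ij ∈ S, c ij.1 ij.2 *
        (Oct.Qv p q k d ij.1 ij.2 1 0 - Oct.Qv p q k d ij.1 ij.2 (-1) 0)
        = (∑ ij ∈ S, c ij.1 ij.2 * Oct.Qv p q k d ij.1 ij.2 1 0)
          - ∑ ij ∈ S, c ij.1 ij.2 * Oct.Qv p q k d ij.1 ij.2 (-1) 0 := by
      rw [← Finset.sum_sub_distrib]
      exact Finset.sum_congr rfl fun ij _ => by ring
    rw [this, e1, e2, sub_zero]
  have hmem : ((0,0) : ℕ × ℕ) ∈ S := by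
    rw [hS, Finset.mem_product]
    constructor <;> · rw [Finset.mem_range]; omega
  have hcollapse : ∑ ij ∈ S, c ij.1 ij.2 *
      (Oct.Qv p q k d ij.1 ij.2 1 0 - Oct.Qv p q k d ij.1 ij.2 (-1) 0)
      = c 0 0 * (Oct.Qv p q k d 0 0 1 0 - Oct.Qv p q k d 0 0 (-1) 0) := by
    refine Finset.sum_eq_single_of_mem _ hmem fun b hb hbne => ?_
    have hb00 : ¬(b.1 = 0 ∧ b.2 = 0) := by
      intro hcontra
      exact hbne (Prod.ext hcontra.1 hcontra.2)
    rw [Oct.Qv_zero_ne p q k d b.1 b.2 hb00, sub_self, mul_zero]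
  have hfinal : c 0 0 * (4 * p * q * Oct.Rv p q k d) = 0 := by
    rw [← hdiff, hcollapse, Oct.Qv00_zero, Oct.Qv00_zero]
    ring
  have hR : Oct.Rv p q k d ≠ 0 := Oct.Rv_ne p q k d (by omega)
  have hc00 : c 0 0 = 0 := by
    rcases mul_eq_zero.mp hfinal with h | h
    · exact h
    · exfalso
      have : (4 : ℂ) * p * q ≠ 0 := by
        refine mul_ne_zero (mul_ne_zero ?_ ?_) ?_
        · norm_num
        · exact_mod_cast Nat.cast_ne_zero.mpr (by omega)
        · exact_mod_cast Nat.cast_ne_zero.mpr (by omega)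
      exact (mul_ne_zero this hR) h
  apply hQ0
  rw [← Oct.fs_zero]
  exact hc00
end

section
/- For the (r+1)×(r+1) matrix X = (x_{ij}) of indeterminates, the function f = 1/det(X) is annihilated by the toric operators ∂_{ij}∂_{kl} - ∂_{il}∂_{kj} for all i,k ∈ {0,...,r}, j,l ∈ {0,...,r}, and satisfies the Euler equations (Σ_j x_{ij} ∂_{ij} + 1) f = 0 for each row i and (Σ_i x_{ij} ∂_{ij} + 1) f = 0 for each column j. -/
/-- Partial derivative with respect to the matrix entry `(i,j)` of a function of an
`(r+1)×(r+1)` array of complex variables. -/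
noncomputable def pdM {r : ℕ} (i j : Fin (r + 1))
    (g : (Fin (r + 1) → Fin (r + 1) → ℂ) → ℂ) : (Fin (r + 1) → Fin (r + 1) → ℂ) → ℂ :=
  fun X => fderiv ℂ g X (Pi.single i (Pi.single j 1))

attribute [local instance] Matrix.linftyOpNormedAddCommGroup Matrix.linftyOpNormedSpace
  Matrix.linftyOpNormedRing Matrix.linftyOpNormedAlgebra

namespace RecDet

variable {r : ℕ}

/-- The space of variables. -/
abbrev V (r : ℕ) := Fin (r + 1) → Fin (r + 1) → ℂ

/-- The matrix space. -/
abbrev M (r : ℕ) := Matrix (Fin (r + 1)) (Fin (r + 1)) ℂ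

/-- The coordinate direction. -/
abbrev E (i j : Fin (r + 1)) : V r := Pi.single i (Pi.single j 1)

/-- `Matrix.of` as a continuous linear map. -/
noncomputable def ofL : V r →L[ℂ] M r :=
  LinearMap.toContinuousLinearMap
    { toFun := Matrix.of, map_add' := fun _ _ => rfl, map_smul' := fun _ _ => rfl }

@[simp] lemma ofL_apply (X : V r) : (ofL X : M r) = Matrix.of X := rfl

/-- Entry evaluation as a continuous linear map. -/
noncomputable def entryL (l k : Fin (r + 1)) : M r →L[ℂ] ℂ :=
  LinearMap.toContinuousLinearMap
    { toFun := fun A => A l k, map_add' := fun _ _ => rfl, map_smul' := fun _ _ => rfl }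

@[simp] lemma entryL_apply (l k : Fin (r + 1)) (A : M r) : entryL l k A = A l k := rfl

lemma of_add_smul_E (X : V r) (i j : Fin (r + 1)) (t : ℂ) :
    Matrix.of (X + t • E i j)
      = Matrix.updateRow (Matrix.of X) i (X i + t • (Pi.single j 1 : Fin (r + 1) → ℂ)) := by
  ext a b
  rcases eq_or_ne a i with rfl | h
  · simp [E]
  · simp [E, Matrix.updateRow_ne h, Pi.single_apply, h]

lemma det_line (X : V r) (i j : Fin (r + 1)) (t : ℂ) :
    (Matrix.of (X + t • E i j)).det
      = (Matrix.of X).det + t * (Matrix.of X).adjugate j i := by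
  rw [of_add_smul_E, Matrix.det_updateRow_add, Matrix.det_updateRow_smul,
    Matrix.adjugate_apply]
  have h : Matrix.updateRow (Matrix.of X) i (X i) = Matrix.of X :=
    Matrix.updateRow_eq_self (Matrix.of X) i
  rw [h]

lemma diff_prod {ι : Type*} (s : Finset ι) (g : ι → V r → ℂ)
    (h : ∀ a, Differentiable ℂ (g a)) :
    Differentiable ℂ (fun X => ∏ a ∈ s, g a X) := by
  classical
  induction s using Finset.induction_on with
  | empty => simp only [Finset.prod_empty]; exact differentiable_const (1 : ℂ)
  | insert _ _ h' ih =>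
      simp only [Finset.prod_insert h']
      exact (h _).mul ih

lemma det_diff : Differentiable ℂ (fun X : V r => (Matrix.of X).det) := by
  have h : ∀ a b : Fin (r + 1), Differentiable ℂ (fun X : V r => X a b) := by
    intro a b
    exact (((ContinuousLinearMap.proj b : (Fin (r+1) → ℂ) →L[ℂ] ℂ).comp
      (ContinuousLinearMap.proj a : V r →L[ℂ] (Fin (r+1) → ℂ)))).differentiable
  simp only [Matrix.det_apply']
  apply Differentiable.fun_sum
  intro σ _
  exact (diff_prod Finset.univ _ (fun a => h (σ a) a)).const_mul _

lemma fderiv_line (g : V r → ℂ) (X v : V r) (h : DifferentiableAt ℂ g X) :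
    fderiv ℂ g X v = deriv (fun t : ℂ => g (X + t • v)) 0 := by
  have h1 : HasDerivAt (fun t : ℂ => X + t • v) v 0 := by
    simpa using ((hasDerivAt_id (0 : ℂ)).smul_const v).const_add X
  have h2 : HasFDerivAt g (fderiv ℂ g X) (X + (0 : ℂ) • v) := by
    simpa using h.hasFDerivAt
  simpa [Function.comp_def] using (h2.comp_hasDerivAt 0 h1).deriv.symm

lemma detline_hasDeriv (X : V r) (i j : Fin (r + 1)) :
    HasDerivAt (fun t : ℂ => (Matrix.of (X + t • E i j)).det)
      ((Matrix.of X).adjugate j i) 0 := by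
  have h1 : HasDerivAt (fun t : ℂ => (Matrix.of X).det + t * (Matrix.of X).adjugate j i)
      ((Matrix.of X).adjugate j i) 0 := by
    simpa using ((hasDerivAt_id (0 : ℂ)).mul_const ((Matrix.of X).adjugate j i)).const_add
      (Matrix.of X).det
  simpa only [← det_line] using h1

lemma triple_entry (A B : M r) (i j l k : Fin (r + 1)) :
    (A * Matrix.of (E i j) * B) l k = A l i * B j k := by
  simp only [Matrix.mul_apply, Matrix.of_apply, Pi.single_apply, ite_apply,
    Pi.zero_apply]
  simp [Finset.mul_sum, Finset.sum_mul, mul_ite, ite_mul, Finset.sum_ite_eq,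
    Finset.sum_ite_eq']

lemma inv_line_matrix (X : V r) (hX : IsUnit (Matrix.of X)) (i j : Fin (r + 1)) :
    HasDerivAt (fun t : ℂ => (Matrix.of (X + t • E i j))⁻¹)
      (-((Matrix.of X)⁻¹ * Matrix.of (E i j) * (Matrix.of X)⁻¹)) 0 := by
  have hm : HasDerivAt (fun t : ℂ => Matrix.of X + t • Matrix.of (E i j))
      (Matrix.of (E i j)) (0 : ℂ) := by
    have := ((hasDerivAt_id (0 : ℂ)).smul_const (Matrix.of (E i j))).const_add (Matrix.of X)
    simp at this
    exact this
  have hinv := hasFDerivAt_ringInverse (𝕜 := ℂ) (R := M r) hX.unit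
  rw [hX.unit_spec] at hinv
  have h2 : HasFDerivAt (Ring.inverse (M₀ := M r))
      (-(ContinuousLinearMap.mulLeftRight ℂ (M r) ↑hX.unit⁻¹ ↑hX.unit⁻¹))
      (Matrix.of X + (0 : ℂ) • Matrix.of (E i j)) := by simpa using hinv
  have h3 := h2.comp_hasDerivAt 0 hm
  have h4 : (fun t : ℂ => (Matrix.of (X + t • E i j))⁻¹)
      = fun t : ℂ => Ring.inverse (Matrix.of X + t • Matrix.of (E i j)) := by
    funext t
    rw [← Matrix.nonsing_inv_eq_ringInverse]
    rfl
  rw [h4]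
  convert h3 using 1
  · rfl
  · rfl
  · rfl
  · rfl
  · simp [Matrix.coe_units_inv]

lemma inv_entry_line_hasDeriv (X : V r) (hX : IsUnit (Matrix.of X)) (i j l k : Fin (r + 1)) :
    HasDerivAt (fun t : ℂ => (Matrix.of (X + t • E i j))⁻¹ l k)
      (-((Matrix.of X)⁻¹ l i * (Matrix.of X)⁻¹ j k)) 0 := by
  have h := (entryL l k).hasFDerivAt.comp_hasDerivAt 0 (inv_line_matrix X hX i j)
  have h2 : entryL (r := r) l k (-((Matrix.of X)⁻¹ * Matrix.of (E i j) * (Matrix.of X)⁻¹))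
      = -((Matrix.of X)⁻¹ l i * (Matrix.of X)⁻¹ j k) := by
    rw [map_neg, entryL_apply, triple_entry]
  rw [← h2]
  exact h

lemma inv_entry_diffAt (X : V r) (hX : IsUnit (Matrix.of X)) (l k : Fin (r + 1)) :
    DifferentiableAt ℂ (fun Y : V r => (Matrix.of Y)⁻¹ l k) X := by
  have h1 : DifferentiableAt ℂ (Ring.inverse (M₀ := M r)) (ofL X) :=
    differentiableAt_inverse (by simpa using hX)
  have h2 : DifferentiableAt ℂ (fun Y : V r => Ring.inverse (M₀ := M r) (ofL Y)) X :=
    h1.comp X (ofL.differentiableAt)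
  have h3 : DifferentiableAt ℂ
      (fun Y : V r => entryL l k (Ring.inverse (M₀ := M r) (ofL Y))) X :=
    ((entryL l k).differentiableAt).comp X h2
  have h4 : (fun Y : V r => (Matrix.of Y)⁻¹ l k)
      = fun Y : V r => entryL l k (Ring.inverse (M₀ := M r) (ofL Y)) := by
    funext Y
    rw [entryL_apply, ofL_apply, ← Matrix.nonsing_inv_eq_ringInverse]
  rw [h4]
  exact h3

lemma inv_entry_eq (X : V r) (a b : Fin (r + 1)) :
    (Matrix.of X)⁻¹ a b = ((Matrix.of X).det)⁻¹ * (Matrix.of X).adjugate a b := by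
  rw [Matrix.inv_def, Ring.inverse_eq_inv']
  simp

lemma pd_f (X : V r) (h0 : (Matrix.of X).det ≠ 0) (k l : Fin (r + 1)) :
    pdM k l (fun Y => ((Matrix.of Y).det)⁻¹) X
      = -((Matrix.of X)⁻¹ l k) * ((Matrix.of X).det)⁻¹ := by
  have hdf : DifferentiableAt ℂ (fun Y : V r => ((Matrix.of Y).det)⁻¹) X :=
    (det_diff X).inv h0
  simp only [pdM]
  rw [fderiv_line _ X (E k l) hdf]
  have h1 : (fun t : ℂ => ((Matrix.of (X + t • E k l)).det)⁻¹)
      = fun t : ℂ => ((Matrix.of X).det + t * (Matrix.of X).adjugate l k)⁻¹ := by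
    funext t; rw [det_line]
  rw [h1]
  have h3 : HasDerivAt (fun t : ℂ => (Matrix.of X).det + t * (Matrix.of X).adjugate l k)
      ((Matrix.of X).adjugate l k) 0 := by
    simpa using ((hasDerivAt_id (0 : ℂ)).mul_const ((Matrix.of X).adjugate l k)).const_add
      ((Matrix.of X).det)
  have h4 := h3.fun_inv (by simpa using h0)
  rw [h4.deriv]
  rw [inv_entry_eq]
  rw [zero_mul, add_zero]
  field_simp

lemma pd2 (X : V r) (h0 : (Matrix.of X).det ≠ 0) (i j k l : Fin (r + 1)) :
    pdM i j (pdM k l (fun Y => ((Matrix.of Y).det)⁻¹)) X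
      = ((Matrix.of X)⁻¹ l i * (Matrix.of X)⁻¹ j k
          + (Matrix.of X)⁻¹ l k * (Matrix.of X)⁻¹ j i) * ((Matrix.of X).det)⁻¹ := by
  have hX : IsUnit (Matrix.of X) := (Matrix.isUnit_iff_isUnit_det _).2 h0.isUnit
  have hopen : IsOpen {Y : V r | (Matrix.of Y).det ≠ 0} :=
    IsOpen.preimage det_diff.continuous isOpen_compl_singleton
  have heq : pdM k l (fun Y => ((Matrix.of Y).det)⁻¹)
      =ᶠ[nhds X] fun Y : V r => -((Matrix.of Y)⁻¹ l k) * ((Matrix.of Y).det)⁻¹ := by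
    filter_upwards [hopen.mem_nhds h0] with Y hY
    exact pd_f Y hY k l
  have hGd : DifferentiableAt ℂ
      (fun Y : V r => -((Matrix.of Y)⁻¹ l k) * ((Matrix.of Y).det)⁻¹) X :=
    ((inv_entry_diffAt X hX l k).neg).mul ((det_diff X).inv h0)
  simp only [pdM]
  rw [heq.fderiv_eq]
  rw [fderiv_line _ X (E i j) hGd]
  have h1 := (inv_entry_line_hasDeriv X hX i j l k).fun_neg
  have h2 := (detline_hasDeriv X i j).fun_inv (by simpa using h0)
  have h4 := h1.fun_mul h2
  rw [h4.deriv]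
  simp only [zero_smul, add_zero]
  rw [inv_entry_eq X j i]
  have hlk := inv_entry_eq X l k
  have hli := inv_entry_eq X l i
  have hjk := inv_entry_eq X j k
  rw [hlk, hli, hjk]
  field_simp

end RecDet

/-- For the `(r+1)×(r+1)` matrix of indeterminates `X = (x_{ij})`, the function
`f = 1/det X` is annihilated by the toric operators `∂_{ij}∂_{kl} - ∂_{il}∂_{kj}` and
satisfies the Euler equations `(Σ_j x_{ij}∂_{ij} + 1) f = 0` for each row `i` and
`(Σ_i x_{ij}∂_{ij} + 1) f = 0` for each column `j`; i.e. `1/det` is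
`Δ_r × Δ_r`-hypergeometric of degree `β = (-1,…,-1)`. -/
theorem reciprocal_determinant_is_hypergeometric {r : ℕ}
    (f : (Fin (r + 1) → Fin (r + 1) → ℂ) → ℂ)
    (hf : f = fun X => (Matrix.det (Matrix.of X))⁻¹) :
    ∀ X : Fin (r + 1) → Fin (r + 1) → ℂ, Matrix.det (Matrix.of X) ≠ 0 →
      (∀ i k j l : Fin (r + 1), pdM i j (pdM k l f) X - pdM i l (pdM k j f) X = 0) ∧
      (∀ i : Fin (r + 1), (∑ j, X i j * pdM i j f X) + f X = 0) ∧
      (∀ j : Fin (r + 1), (∑ i, X i j * pdM i j f X) + f X = 0) := by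
  subst hf
  intro X h0
  have hu : IsUnit ((Matrix.of X).det) := h0.isUnit
  refine ⟨fun i k j l => ?_, fun i => ?_, fun j => ?_⟩
  · rw [RecDet.pd2 X h0 i j k l, RecDet.pd2 X h0 i l k j]
    ring
  · have h1 : ∀ j, X i j * pdM i j (fun Y => ((Matrix.of Y).det)⁻¹) X
        = -(X i j * (Matrix.of X)⁻¹ j i) * ((Matrix.of X).det)⁻¹ := by
      intro j; rw [RecDet.pd_f X h0 i j]; ring
    simp only [h1]
    have h2 : ∑ j, -(X i j * (Matrix.of X)⁻¹ j i) * ((Matrix.of X).det)⁻¹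
        = -(((Matrix.of X) * (Matrix.of X)⁻¹) i i) * ((Matrix.of X).det)⁻¹ := by
      rw [Matrix.mul_apply, neg_mul, ← Finset.sum_mul]
      simp only [Matrix.of_apply, Finset.sum_neg_distrib, neg_mul]
    rw [h2, Matrix.mul_nonsing_inv _ hu]
    simp
  · have h1 : ∀ i, X i j * pdM i j (fun Y => ((Matrix.of Y).det)⁻¹) X
        = -((Matrix.of X)⁻¹ j i * X i j) * ((Matrix.of X).det)⁻¹ := by
      intro i; rw [RecDet.pd_f X h0 i j]; ring
    simp only [h1]
    have h2 : ∑ i, -((Matrix.of X)⁻¹ j i * X i j) * ((Matrix.of X).det)⁻¹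
        = -(((Matrix.of X)⁻¹ * (Matrix.of X)) j j) * ((Matrix.of X).det)⁻¹ := by
      rw [Matrix.mul_apply, neg_mul, ← Finset.sum_mul]
      simp only [Matrix.of_apply, Finset.sum_neg_distrib, neg_mul]
    rw [h2, Matrix.nonsing_inv_mul _ hu]
    simp
end

section
/- Let a, b be two linearly independent vectors in ℝ², c = a + b, and r > 1 a real number with r ≠ 2. Then the four points O = (0,0), c, r·a, r·b do not lie on two parallel lines (in the sense that no partition of these four points into two pairs gives two parallel lines). -/
/-- Two vectors in the plane are parallel (as directions of lines through pairs of points). -/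
def ParallelVec (v w : ℝ × ℝ) : Prop := ∃ k : ℝ, v = k • w ∨ w = k • v

/-- Let `a, b` be linearly independent vectors in `ℝ²`, `c = a + b`, and `r > 1` with `r ≠ 2`.
Then the four points `O, c, r•a, r•b` do not lie on two parallel lines, in the sense that
no partition of the four points into two pairs gives two parallel lines. -/
theorem four_points_not_on_two_parallel_lines (a b : ℝ × ℝ)
    (hab : LinearIndependent ℝ ![a, b]) (r : ℝ) (hr1 : 1 < r) (hr2 : r ≠ 2)
    (c : ℝ × ℝ) (hc : c = a + b) :
    ¬ ParallelVec (c - 0) (r • b - r • a) ∧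
    ¬ ParallelVec (r • a - 0) (r • b - c) ∧
    ¬ ParallelVec (r • b - 0) (r • a - c) := by
  have h := LinearIndependent.pair_iff.mp hab
  subst hc
  refine ⟨?_, ?_, ?_⟩
  · rintro ⟨k, hk | hk⟩
    · have := h (1 + k*r) (1 - k*r) (by linear_combination (norm := module) hk)
      linarith [this.1, this.2]
    · have := h (k + r) (k - r) (by linear_combination (norm := module) -hk)
      linarith [this.1, this.2]
  · rintro ⟨k, hk | hk⟩
    · have := h (r + k) (k - k*r) (by linear_combination (norm := module) hk)
      nlinarith [this.1, this.2]
    · have := h (-(1 + k*r)) (r - 1) (by linear_combination (norm := module) hk)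
      linarith [this.2]
  · rintro ⟨k, hk | hk⟩
    · have := h (k - k*r) (r + k) (by linear_combination (norm := module) hk)
      nlinarith [this.1, this.2]
    · have := h (r - 1) (-(1 + k*r)) (by linear_combination (norm := module) hk)
      linarith [this.1]
end
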